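/- arXiv:1905.09487 — 5 statements merged into one kernel-verified Lean document; each statement's English description precedes it below -/
import Mathlib

section
/- If f₁ and f₂ are linearly independent analytic solutions of f'' + a f = 0 on a domain Ω (a analytic on Ω), then the functions f₁², f₁f₂, f₂² are linearly independent and satisfy the third-order equation g''' + 4a g' + 2a' g = 0. -/
open Filter Set

lemma mul_eqOn_zero {Ω : Set ℂ} (hΩ : IsOpen Ω) (hconn : IsPreconnected Ω)
    {p q : ℂ → ℂ} (hp : AnalyticOnNhd ℂ p Ω) (hq : AnalyticOnNhd ℂ q Ω)
    (h : ∀ z ∈ Ω, p z * q z = 0) : Set.EqOn p 0 Ω ∨ Set.EqOn q 0 Ω := by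
  by_cases hp0 : ∀ z ∈ Ω, p z = 0
  · exact Or.inl fun z hz => hp0 z hz
  push_neg at hp0
  obtain ⟨z₀, hz₀, hpz₀⟩ := hp0
  right
  have hcont : ContinuousAt p z₀ := (hp z₀ hz₀).continuousAt
  have hne : ∀ᶠ w in nhds z₀, p w ≠ 0 := hcont.eventually_ne hpz₀
  have hmem : Ω ∈ nhds z₀ := hΩ.mem_nhds hz₀
  have hq0 : q =ᶠ[nhds z₀] 0 := by
    filter_upwards [hne, hmem] with w hw hwΩ
    have := mul_eq_zero.mp (h w hwΩ)
    simpa [hw] using this.resolve_left hw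
  exact hq.eqOn_zero_of_preconnected_of_eventuallyEq_zero hconn hz₀ hq0

lemma third_order_prod {Ω : Set ℂ} (hΩ : IsOpen Ω) {a u v : ℂ → ℂ}
    (ha : AnalyticOnNhd ℂ a Ω) (hu : AnalyticOnNhd ℂ u Ω) (hv : AnalyticOnNhd ℂ v Ω)
    (hu2 : ∀ z ∈ Ω, deriv (deriv u) z = -(a z * u z))
    (hv2 : ∀ z ∈ Ω, deriv (deriv v) z = -(a z * v z)) :
    ∀ z ∈ Ω, iteratedDeriv 3 (fun z => u z * v z) z
      + 4 * a z * deriv (fun z => u z * v z) z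
      + 2 * deriv a z * (u z * v z) = 0 := by
  have hu' : AnalyticOnNhd ℂ (deriv u) Ω := hu.deriv
  have hv' : AnalyticOnNhd ℂ (deriv v) Ω := hv.deriv
  set g := fun z => u z * v z with hg
  have h1 : ∀ z ∈ Ω, deriv g z = deriv u z * v z + u z * deriv v z := by
    intro z hz
    exact ((hu z hz).differentiableAt.hasDerivAt.mul
      (hv z hz).differentiableAt.hasDerivAt).deriv
  have h2 : ∀ z ∈ Ω, deriv (deriv g) z
      = -(a z * u z) * v z + 2 * (deriv u z * deriv v z) + u z * -(a z * v z) := by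
    intro z hz
    have hev : deriv g =ᶠ[nhds z] fun w => deriv u w * v w + u w * deriv v w :=
      Filter.eventuallyEq_of_mem (hΩ.mem_nhds hz) h1
    rw [hev.deriv_eq]
    have H : HasDerivAt (fun w => deriv u w * v w + u w * deriv v w)
        (deriv (deriv u) z * v z + deriv u z * deriv v z
          + (deriv u z * deriv v z + u z * deriv (deriv v) z)) z :=
      ((hu' z hz).differentiableAt.hasDerivAt.mul (hv z hz).differentiableAt.hasDerivAt).add
        ((hu z hz).differentiableAt.hasDerivAt.mul (hv' z hz).differentiableAt.hasDerivAt)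
    rw [H.deriv, hu2 z hz, hv2 z hz]; ring
  have h3 : ∀ z ∈ Ω, deriv (deriv (deriv g)) z
      = -2 * deriv a z * (u z * v z) - 4 * a z * (deriv u z * v z + u z * deriv v z) := by
    intro z hz
    have hev : deriv (deriv g) =ᶠ[nhds z]
        fun w => -(a w * u w) * v w + 2 * (deriv u w * deriv v w) + u w * -(a w * v w) :=
      Filter.eventuallyEq_of_mem (hΩ.mem_nhds hz) h2
    rw [hev.deriv_eq]
    have hda := (ha z hz).differentiableAt.hasDerivAt
    have hdu := (hu z hz).differentiableAt.hasDerivAt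
    have hdv := (hv z hz).differentiableAt.hasDerivAt
    have hdu' := (hu' z hz).differentiableAt.hasDerivAt
    have hdv' := (hv' z hz).differentiableAt.hasDerivAt
    have H : HasDerivAt
        (fun w => -(a w * u w) * v w + 2 * (deriv u w * deriv v w) + u w * -(a w * v w))
        ((-(deriv a z * u z + a z * deriv u z) * v z + -(a z * u z) * deriv v z)
          + (2 * (deriv (deriv u) z * deriv v z + deriv u z * deriv (deriv v) z))
          + (deriv u z * -(a z * v z) + u z * -(deriv a z * v z + a z * deriv v z))) z :=
      ((((hda.mul hdu).neg.mul hdv).add ((hdu'.mul hdv').const_mul 2)).add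
        (hdu.mul (hda.mul hdv).neg))
    rw [H.deriv, hu2 z hz, hv2 z hz]; ring
  intro z hz
  have : iteratedDeriv 3 g z = deriv (deriv (deriv g)) z := by
    simp [iteratedDeriv_succ, iteratedDeriv_zero]
  rw [this, h3 z hz, h1 z hz]; ring

theorem squares_solve_third_order (Ω : Set ℂ) (hΩ : IsOpen Ω) (hconn : IsConnected Ω)
    (a f₁ f₂ : ℂ → ℂ) (ha : AnalyticOn ℂ a Ω)
    (hf₁ : AnalyticOn ℂ f₁ Ω) (hf₂ : AnalyticOn ℂ f₂ Ω)
    (hode₁ : ∀ z ∈ Ω, deriv (deriv f₁) z + a z * f₁ z = 0)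
    (hode₂ : ∀ z ∈ Ω, deriv (deriv f₂) z + a z * f₂ z = 0)
    (hli : ∀ c₁ c₂ : ℂ, (∀ z ∈ Ω, c₁ * f₁ z + c₂ * f₂ z = 0) → c₁ = 0 ∧ c₂ = 0) :
    (∀ g ∈ ({fun z => f₁ z ^ 2, fun z => f₁ z * f₂ z, fun z => f₂ z ^ 2} :
        Set (ℂ → ℂ)),
      ∀ z ∈ Ω, iteratedDeriv 3 g z + 4 * a z * deriv g z + 2 * deriv a z * g z = 0) ∧
    (∀ c₀ c₁ c₂ : ℂ,
      (∀ z ∈ Ω, c₀ * f₁ z ^ 2 + c₁ * (f₁ z * f₂ z) + c₂ * f₂ z ^ 2 = 0) →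
        c₀ = 0 ∧ c₁ = 0 ∧ c₂ = 0) := by
  have haN : AnalyticOnNhd ℂ a Ω := (hΩ.analyticOn_iff_analyticOnNhd).mp ha
  have h1N : AnalyticOnNhd ℂ f₁ Ω := (hΩ.analyticOn_iff_analyticOnNhd).mp hf₁
  have h2N : AnalyticOnNhd ℂ f₂ Ω := (hΩ.analyticOn_iff_analyticOnNhd).mp hf₂
  have hode₁' : ∀ z ∈ Ω, deriv (deriv f₁) z = -(a z * f₁ z) := fun z hz => by
    linear_combination hode₁ z hz
  have hode₂' : ∀ z ∈ Ω, deriv (deriv f₂) z = -(a z * f₂ z) := fun z hz => by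
    linear_combination hode₂ z hz
  constructor
  · intro g hg
    have e1 : (fun z => f₁ z ^ 2) = fun z => f₁ z * f₁ z := by funext z; ring
    have e2 : (fun z => f₂ z ^ 2) = fun z => f₂ z * f₂ z := by funext z; ring
    simp only [Set.mem_insert_iff, Set.mem_singleton_iff] at hg
    rcases hg with rfl | rfl | rfl
    · rw [e1]; exact third_order_prod hΩ haN h1N h1N hode₁' hode₁'
    · exact third_order_prod hΩ haN h1N h2N hode₁' hode₂'
    · rw [e2]; exact third_order_prod hΩ haN h2N h2N hode₂' hode₂'
  · intro c₀ c₁ c₂ heq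
    have hc₀ : c₀ = 0 := by
      by_contra hc₀
      obtain ⟨d, hd⟩ := IsAlgClosed.exists_pow_nat_eq (c₁ ^ 2 - 4 * c₀ * c₂) (n := 2) two_pos
      set r : ℂ := (-c₁ + d) / (2 * c₀) with hr
      set s : ℂ := (-c₁ - d) / (2 * c₀) with hs
      have key : ∀ X Y : ℂ, c₀ * ((X - r * Y) * (X - s * Y))
          = c₀ * X ^ 2 + c₁ * (X * Y) + c₂ * Y ^ 2 := by
        intro X Y
        rw [hr, hs]
        field_simp
        ring_nf
        linear_combination (-(Y ^ 2)) * hd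
      have hprod : ∀ z ∈ Ω, (f₁ z - r * f₂ z) * (f₁ z - s * f₂ z) = 0 := by
        intro z hz
        have h := heq z hz
        have : c₀ * ((f₁ z - r * f₂ z) * (f₁ z - s * f₂ z)) = 0 := by
          rw [key]; exact h
        exact (mul_eq_zero.mp this).resolve_left hc₀
      have hpA : AnalyticOnNhd ℂ (fun z => f₁ z - r * f₂ z) Ω :=
        h1N.sub ((analyticOnNhd_const).mul h2N)
      have hqA : AnalyticOnNhd ℂ (fun z => f₁ z - s * f₂ z) Ω :=
        h1N.sub ((analyticOnNhd_const).mul h2N)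
      rcases mul_eqOn_zero hΩ hconn.isPreconnected hpA hqA hprod with h | h
      · have := hli 1 (-r) (fun z hz => by
          have := h hz; simp only [Pi.zero_apply] at this; linear_combination this)
        exact one_ne_zero this.1
      · have := hli 1 (-s) (fun z hz => by
          have := h hz; simp only [Pi.zero_apply] at this; linear_combination this)
        exact one_ne_zero this.1
    subst hc₀
    have hprod : ∀ z ∈ Ω, f₂ z * (c₁ * f₁ z + c₂ * f₂ z) = 0 := by
      intro z hz
      have h := heq z hz
      linear_combination h
    have hqA : AnalyticOnNhd ℂ (fun z => c₁ * f₁ z + c₂ * f₂ z) Ω :=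
      ((analyticOnNhd_const).mul h1N).add ((analyticOnNhd_const).mul h2N)
    rcases mul_eqOn_zero hΩ hconn.isPreconnected h2N hqA hprod with h | h
    · have := hli 0 1 (fun z hz => by
        have := h hz; simp only [Pi.zero_apply] at this; linear_combination this)
      exact absurd this.2 one_ne_zero
    · have := hli c₁ c₂ (fun z hz => by
        have := h hz; simp only [Pi.zero_apply] at this; linear_combination this)
      exact ⟨rfl, this.1, this.2⟩
end

section
/- If f₁ and f₂ are linearly independent analytic solutions of f'' + a f = 0 on a domain Ω, then f₁³, f₁²f₂, f₁f₂², f₂³ are linearly independent solutions of the fourth-order equation g⁽⁴⁾ + 10a g'' + 10a' g' + (3a'' + 9a²) g = 0. -/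
open Set Filter

private lemma iter2 (f : ℂ → ℂ) : iteratedDeriv 2 f = deriv (deriv f) := by
  have h : (2:ℕ) = 0 + 1 + 1 := by norm_num
  rw [h, iteratedDeriv_succ, iteratedDeriv_succ, iteratedDeriv_zero]

private lemma iter3 (f : ℂ → ℂ) : iteratedDeriv 3 f = deriv (deriv (deriv f)) := by
  have h : (3:ℕ) = 0 + 1 + 1 + 1 := by norm_num
  rw [h, iteratedDeriv_succ, iteratedDeriv_succ, iteratedDeriv_succ, iteratedDeriv_zero]

private lemma iter4 (f : ℂ → ℂ) : iteratedDeriv 4 f = deriv (deriv (deriv (deriv f))) := by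
  have h : (4:ℕ) = 0 + 1 + 1 + 1 + 1 := by norm_num
  rw [h, iteratedDeriv_succ, iteratedDeriv_succ, iteratedDeriv_succ, iteratedDeriv_succ,
    iteratedDeriv_zero]

private lemma derivs_key (Ω : Set ℂ) (hΩ : IsOpen Ω) (a p q : ℂ → ℂ)
    (ha : AnalyticOnNhd ℂ a Ω) (hp : AnalyticOnNhd ℂ p Ω) (hq : AnalyticOnNhd ℂ q Ω)
    (hop : ∀ z ∈ Ω, deriv (deriv p) z = -(a z * p z))
    (hoq : ∀ z ∈ Ω, deriv (deriv q) z = -(a z * q z)) :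
    ∀ z ∈ Ω,
      deriv (fun w => p w ^ 2 * q w) z
        = 2 * p z * deriv p z * q z + p z ^ 2 * deriv q z ∧
      iteratedDeriv 2 (fun w => p w ^ 2 * q w) z
        = 2 * (deriv p z) ^ 2 * q z + 4 * p z * deriv p z * deriv q z
          - 3 * a z * p z ^ 2 * q z ∧
      iteratedDeriv 3 (fun w => p w ^ 2 * q w) z
        = 6 * (deriv p z) ^ 2 * deriv q z - 14 * a z * p z * deriv p z * q z
          - 7 * a z * p z ^ 2 * deriv q z - 3 * deriv a z * p z ^ 2 * q z ∧
      iteratedDeriv 4 (fun w => p w ^ 2 * q w) z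
        = -(40 * a z * p z * deriv p z * deriv q z) - 20 * a z * (deriv p z) ^ 2 * q z
          - 20 * deriv a z * p z * deriv p z * q z - 10 * deriv a z * p z ^ 2 * deriv q z
          + 21 * a z ^ 2 * p z ^ 2 * q z - 3 * deriv (deriv a) z * p z ^ 2 * q z := by
  have hp' : ∀ z ∈ Ω, HasDerivAt p (deriv p z) z :=
    fun z hz => (hp z hz).differentiableAt.hasDerivAt
  have hq' : ∀ z ∈ Ω, HasDerivAt q (deriv q z) z :=
    fun z hz => (hq z hz).differentiableAt.hasDerivAt
  have ha' : ∀ z ∈ Ω, HasDerivAt a (deriv a z) z :=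
    fun z hz => (ha z hz).differentiableAt.hasDerivAt
  have hdp : ∀ z ∈ Ω, HasDerivAt (deriv p) (deriv (deriv p) z) z :=
    fun z hz => (hp.deriv z hz).differentiableAt.hasDerivAt
  have hdq : ∀ z ∈ Ω, HasDerivAt (deriv q) (deriv (deriv q) z) z :=
    fun z hz => (hq.deriv z hz).differentiableAt.hasDerivAt
  have hda : ∀ z ∈ Ω, HasDerivAt (deriv a) (deriv (deriv a) z) z :=
    fun z hz => (ha.deriv z hz).differentiableAt.hasDerivAt
  have d1 : ∀ z ∈ Ω, HasDerivAt (fun w => p w ^ 2 * q w)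
      (2 * p z * deriv p z * q z + p z ^ 2 * deriv q z) z := by
    intro z hz
    have h := ((hp' z hz).pow 2).mul (hq' z hz)
    refine h.congr_deriv ?_; simp only [Pi.mul_apply, Pi.pow_apply, Pi.add_apply, Pi.sub_apply, Nat.cast_ofNat]; ring
  have e1 : ∀ z ∈ Ω, deriv (fun w => p w ^ 2 * q w) z
      = 2 * p z * deriv p z * q z + p z ^ 2 * deriv q z := fun z hz => (d1 z hz).deriv
  have d2 : ∀ z ∈ Ω, HasDerivAt (fun w => 2 * p w * deriv p w * q w + p w ^ 2 * deriv q w)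
      (2 * (deriv p z) ^ 2 * q z + 4 * p z * deriv p z * deriv q z
        - 3 * a z * p z ^ 2 * q z) z := by
    intro z hz
    have h1 := (((hp' z hz).const_mul (2:ℂ)).mul (hdp z hz)).mul (hq' z hz)
    have h2 := ((hp' z hz).pow 2).mul (hdq z hz)
    have h := h1.add h2
    rw [hop z hz, hoq z hz] at h
    refine h.congr_deriv ?_; simp only [Pi.mul_apply, Pi.pow_apply, Pi.add_apply, Pi.sub_apply, Nat.cast_ofNat]; ring
  have e2 : ∀ z ∈ Ω, deriv (deriv (fun w => p w ^ 2 * q w)) z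
      = 2 * (deriv p z) ^ 2 * q z + 4 * p z * deriv p z * deriv q z
        - 3 * a z * p z ^ 2 * q z := by
    intro z hz
    have heq : deriv (fun w => p w ^ 2 * q w)
        =ᶠ[nhds z] (fun w => 2 * p w * deriv p w * q w + p w ^ 2 * deriv q w) :=
      eventuallyEq_of_mem (hΩ.mem_nhds hz) (fun w hw => e1 w hw)
    rw [heq.deriv_eq]
    exact (d2 z hz).deriv
  have d3 : ∀ z ∈ Ω, HasDerivAt
      (fun w => 2 * (deriv p w) ^ 2 * q w + 4 * p w * deriv p w * deriv q w
        - 3 * a w * p w ^ 2 * q w)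
      (6 * (deriv p z) ^ 2 * deriv q z - 14 * a z * p z * deriv p z * q z
        - 7 * a z * p z ^ 2 * deriv q z - 3 * deriv a z * p z ^ 2 * q z) z := by
    intro z hz
    have h1 := (((hdp z hz).pow 2).const_mul (2:ℂ)).mul (hq' z hz)
    have h2 := (((hp' z hz).const_mul (4:ℂ)).mul (hdp z hz)).mul (hdq z hz)
    have h3 := (((ha' z hz).const_mul (3:ℂ)).mul ((hp' z hz).pow 2)).mul (hq' z hz)
    have h := (h1.add h2).sub h3
    rw [hop z hz, hoq z hz] at h
    refine h.congr_deriv ?_; simp only [Pi.mul_apply, Pi.pow_apply, Pi.add_apply, Pi.sub_apply, Nat.cast_ofNat]; ring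
  have e3 : ∀ z ∈ Ω, deriv (deriv (deriv (fun w => p w ^ 2 * q w))) z
      = 6 * (deriv p z) ^ 2 * deriv q z - 14 * a z * p z * deriv p z * q z
        - 7 * a z * p z ^ 2 * deriv q z - 3 * deriv a z * p z ^ 2 * q z := by
    intro z hz
    have heq : deriv (deriv (fun w => p w ^ 2 * q w))
        =ᶠ[nhds z] (fun w => 2 * (deriv p w) ^ 2 * q w + 4 * p w * deriv p w * deriv q w
          - 3 * a w * p w ^ 2 * q w) :=
      eventuallyEq_of_mem (hΩ.mem_nhds hz) (fun w hw => e2 w hw)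
    rw [heq.deriv_eq]
    exact (d3 z hz).deriv
  have d4 : ∀ z ∈ Ω, HasDerivAt
      (fun w => 6 * (deriv p w) ^ 2 * deriv q w - 14 * a w * p w * deriv p w * q w
        - 7 * a w * p w ^ 2 * deriv q w - 3 * deriv a w * p w ^ 2 * q w)
      (-(40 * a z * p z * deriv p z * deriv q z) - 20 * a z * (deriv p z) ^ 2 * q z
        - 20 * deriv a z * p z * deriv p z * q z - 10 * deriv a z * p z ^ 2 * deriv q z
        + 21 * a z ^ 2 * p z ^ 2 * q z - 3 * deriv (deriv a) z * p z ^ 2 * q z) z := by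
    intro z hz
    have h1 := (((hdp z hz).pow 2).const_mul (6:ℂ)).mul (hdq z hz)
    have h2 := ((((ha' z hz).const_mul (14:ℂ)).mul (hp' z hz)).mul (hdp z hz)).mul (hq' z hz)
    have h3 := (((ha' z hz).const_mul (7:ℂ)).mul ((hp' z hz).pow 2)).mul (hdq z hz)
    have h4 := (((hda z hz).const_mul (3:ℂ)).mul ((hp' z hz).pow 2)).mul (hq' z hz)
    have h := ((h1.sub h2).sub h3).sub h4
    rw [hop z hz, hoq z hz] at h
    refine h.congr_deriv ?_; simp only [Pi.mul_apply, Pi.pow_apply, Pi.add_apply, Pi.sub_apply, Nat.cast_ofNat]; ring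
  have e4 : ∀ z ∈ Ω, deriv (deriv (deriv (deriv (fun w => p w ^ 2 * q w)))) z
      = -(40 * a z * p z * deriv p z * deriv q z) - 20 * a z * (deriv p z) ^ 2 * q z
        - 20 * deriv a z * p z * deriv p z * q z - 10 * deriv a z * p z ^ 2 * deriv q z
        + 21 * a z ^ 2 * p z ^ 2 * q z - 3 * deriv (deriv a) z * p z ^ 2 * q z := by
    intro z hz
    have heq : deriv (deriv (deriv (fun w => p w ^ 2 * q w)))
        =ᶠ[nhds z] (fun w => 6 * (deriv p w) ^ 2 * deriv q w - 14 * a w * p w * deriv p w * q w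
          - 7 * a w * p w ^ 2 * deriv q w - 3 * deriv a w * p w ^ 2 * q w) :=
      eventuallyEq_of_mem (hΩ.mem_nhds hz) (fun w hw => e3 w hw)
    rw [heq.deriv_eq]
    exact (d4 z hz).deriv
  intro z hz
  exact ⟨e1 z hz, by rw [iter2]; exact e2 z hz, by rw [iter3]; exact e3 z hz,
    by rw [iter4]; exact e4 z hz⟩

private lemma wronskian_ne (Ω : Set ℂ) (hΩ : IsOpen Ω) (hconn : IsConnected Ω)
    (f₁ f₂ : ℂ → ℂ) (hf₁ : AnalyticOnNhd ℂ f₁ Ω) (hf₂ : AnalyticOnNhd ℂ f₂ Ω)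
    (hli : ∀ c₁ c₂ : ℂ, (∀ z ∈ Ω, c₁ * f₁ z + c₂ * f₂ z = 0) → c₁ = 0 ∧ c₂ = 0) :
    ∃ z₀ ∈ Ω, f₁ z₀ * deriv f₂ z₀ - f₂ z₀ * deriv f₁ z₀ ≠ 0 := by
  by_contra hcon
  push_neg at hcon
  by_cases hz1 : ∃ z₁ ∈ Ω, f₁ z₁ ≠ 0
  · obtain ⟨z₁, hz₁, hne⟩ := hz1
    set c := f₂ z₁ / f₁ z₁ with hc
    have hUopen : IsOpen {z | z ∈ Ω ∧ f₁ z ≠ 0} := by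
      rw [isOpen_iff_mem_nhds]
      rintro x ⟨hxΩ, hxne⟩
      have h1 : Ω ∈ nhds x := hΩ.mem_nhds hxΩ
      have h2 : ∀ᶠ y in nhds x, f₁ y ≠ 0 :=
        (hf₁ x hxΩ).continuousAt.eventually_ne hxne
      filter_upwards [h1, h2] with y hy1 hy2
      exact ⟨hy1, hy2⟩
    obtain ⟨r, hr, hball⟩ := Metric.isOpen_iff.mp hUopen z₁ ⟨hz₁, hne⟩
    have hQ : ∀ x ∈ Metric.ball z₁ r, HasDerivAt (fun w => f₂ w / f₁ w) 0 x := by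
      intro x hx
      obtain ⟨hxΩ, hxne⟩ := hball hx
      have h := ((hf₂ x hxΩ).differentiableAt.hasDerivAt).div
        ((hf₁ x hxΩ).differentiableAt.hasDerivAt) hxne
      refine h.congr_deriv ?_
      rw [div_eq_zero_iff]
      left
      linear_combination hcon x hxΩ
    have hconst : ∀ x ∈ Metric.ball z₁ r, f₂ x / f₁ x = c := by
      intro x hx
      have hdiff : DifferentiableOn ℂ (fun w => f₂ w / f₁ w) (Metric.ball z₁ r) :=
        fun y hy => ((hQ y hy).differentiableAt).differentiableWithinAt
      have hdz : ∀ y ∈ Metric.ball z₁ r,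
          fderivWithin ℂ (fun w => f₂ w / f₁ w) (Metric.ball z₁ r) y = 0 := by
        intro y hy
        rw [fderivWithin_of_isOpen Metric.isOpen_ball hy, (hQ y hy).hasFDerivAt.fderiv]
        ext w
        simp
      exact (convex_ball z₁ r).is_const_of_fderivWithin_eq_zero hdiff hdz hx
        (Metric.mem_ball_self hr)
    have hF0 : (fun w => f₂ w - c * f₁ w) =ᶠ[nhds z₁] 0 := by
      filter_upwards [Metric.ball_mem_nhds z₁ hr] with x hx
      have h1 := hconst x hx
      obtain ⟨hxΩ, hxne⟩ := hball hx
      rw [div_eq_iff hxne] at h1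
      simp only [Pi.zero_apply]
      rw [h1]
      ring
    have hana : AnalyticOnNhd ℂ (fun w => f₂ w - c * f₁ w) Ω :=
      hf₂.sub (analyticOnNhd_const.mul hf₁)
    have hEq := hana.eqOn_zero_of_preconnected_of_eventuallyEq_zero
      hconn.isPreconnected hz₁ hF0
    have := hli (-c) 1 (fun z hz => by
      have h := hEq hz
      simp only [Pi.zero_apply] at h
      linear_combination h)
    exact one_ne_zero this.2
  · push_neg at hz1
    have := hli 1 0 (fun z hz => by simp [hz1 z hz])
    exact one_ne_zero this.1

theorem cubes_solve_fourth_order (Ω : Set ℂ) (hΩ : IsOpen Ω) (hconn : IsConnected Ω)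
    (a f₁ f₂ : ℂ → ℂ) (ha : AnalyticOn ℂ a Ω)
    (hf₁ : AnalyticOn ℂ f₁ Ω) (hf₂ : AnalyticOn ℂ f₂ Ω)
    (hode₁ : ∀ z ∈ Ω, deriv (deriv f₁) z + a z * f₁ z = 0)
    (hode₂ : ∀ z ∈ Ω, deriv (deriv f₂) z + a z * f₂ z = 0)
    (hli : ∀ c₁ c₂ : ℂ, (∀ z ∈ Ω, c₁ * f₁ z + c₂ * f₂ z = 0) → c₁ = 0 ∧ c₂ = 0) :
    (∀ g ∈ ({fun z => f₁ z ^ 3, fun z => f₁ z ^ 2 * f₂ z,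
        fun z => f₁ z * f₂ z ^ 2, fun z => f₂ z ^ 3} : Set (ℂ → ℂ)),
      ∀ z ∈ Ω, iteratedDeriv 4 g z + 10 * a z * iteratedDeriv 2 g z
        + 10 * deriv a z * deriv g z
        + (3 * iteratedDeriv 2 a z + 9 * a z ^ 2) * g z = 0) ∧
    (∀ c₀ c₁ c₂ c₃ : ℂ,
      (∀ z ∈ Ω, c₀ * f₁ z ^ 3 + c₁ * (f₁ z ^ 2 * f₂ z) + c₂ * (f₁ z * f₂ z ^ 2)
          + c₃ * f₂ z ^ 3 = 0) →
        c₀ = 0 ∧ c₁ = 0 ∧ c₂ = 0 ∧ c₃ = 0) := by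
  have ha' : AnalyticOnNhd ℂ a Ω := (hΩ.analyticOn_iff_analyticOnNhd).mp ha
  have hf₁' : AnalyticOnNhd ℂ f₁ Ω := (hΩ.analyticOn_iff_analyticOnNhd).mp hf₁
  have hf₂' : AnalyticOnNhd ℂ f₂ Ω := (hΩ.analyticOn_iff_analyticOnNhd).mp hf₂
  have hop₁ : ∀ z ∈ Ω, deriv (deriv f₁) z = -(a z * f₁ z) :=
    fun z hz => by linear_combination hode₁ z hz
  have hop₂ : ∀ z ∈ Ω, deriv (deriv f₂) z = -(a z * f₂ z) :=
    fun z hz => by linear_combination hode₂ z hz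
  constructor
  · intro g hg z hz
    simp only [Set.mem_insert_iff, Set.mem_singleton_iff] at hg
    have main : ∀ p q : ℂ → ℂ, AnalyticOnNhd ℂ p Ω → AnalyticOnNhd ℂ q Ω →
        (∀ w ∈ Ω, deriv (deriv p) w = -(a w * p w)) →
        (∀ w ∈ Ω, deriv (deriv q) w = -(a w * q w)) →
        iteratedDeriv 4 (fun w => p w ^ 2 * q w) z
          + 10 * a z * iteratedDeriv 2 (fun w => p w ^ 2 * q w) z
          + 10 * deriv a z * deriv (fun w => p w ^ 2 * q w) z
          + (3 * iteratedDeriv 2 a z + 9 * a z ^ 2) * (p z ^ 2 * q z) = 0 := by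
      intro p q hp hq hopp hoqq
      obtain ⟨h1, h2, h3, h4⟩ := derivs_key Ω hΩ a p q ha' hp hq hopp hoqq z hz
      rw [h1, h2, h4, iter2 a]
      ring
    rcases hg with rfl | rfl | rfl | rfl
    · have hg3 : (fun z => f₁ z ^ 3) = (fun w => f₁ w ^ 2 * f₁ w) := by
        funext w; ring
      rw [hg3]
      simpa using main f₁ f₁ hf₁' hf₁' hop₁ hop₁
    · simpa using main f₁ f₂ hf₁' hf₂' hop₁ hop₂
    · have hg3 : (fun z => f₁ z * f₂ z ^ 2) = (fun w => f₂ w ^ 2 * f₁ w) := by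
        funext w; ring
      rw [hg3]
      simpa using main f₂ f₁ hf₂' hf₁' hop₂ hop₁
    · have hg3 : (fun z => f₂ z ^ 3) = (fun w => f₂ w ^ 2 * f₂ w) := by
        funext w; ring
      rw [hg3]
      simpa using main f₂ f₂ hf₂' hf₂' hop₂ hop₂
  · intro c₀ c₁ c₂ c₃ hrel
    obtain ⟨z₀, hz₀, hW⟩ := wronskian_ne Ω hΩ hconn f₁ f₂ hf₁' hf₂' hli
    have hA : ∀ z ∈ Ω, HasDerivAt f₁ (deriv f₁ z) z :=
      fun z hz => (hf₁' z hz).differentiableAt.hasDerivAt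
    have hB : ∀ z ∈ Ω, HasDerivAt (deriv f₁) (deriv (deriv f₁) z) z :=
      fun z hz => (hf₁'.deriv z hz).differentiableAt.hasDerivAt
    have hC : ∀ z ∈ Ω, HasDerivAt f₂ (deriv f₂ z) z :=
      fun z hz => (hf₂' z hz).differentiableAt.hasDerivAt
    have hD : ∀ z ∈ Ω, HasDerivAt (deriv f₂) (deriv (deriv f₂) z) z :=
      fun z hz => (hf₂'.deriv z hz).differentiableAt.hasDerivAt
    -- first derived relation
    have hE1 : ∀ z ∈ Ω, c₀ * (3 * f₁ z ^ 2 * deriv f₁ z)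
        + c₁ * (2 * f₁ z * deriv f₁ z * f₂ z + f₁ z ^ 2 * deriv f₂ z)
        + c₂ * (deriv f₁ z * f₂ z ^ 2 + 2 * f₁ z * f₂ z * deriv f₂ z)
        + c₃ * (3 * f₂ z ^ 2 * deriv f₂ z) = 0 := by
      intro z hz
      have hS : HasDerivAt
          (fun w => c₀ * f₁ w ^ 3 + c₁ * (f₁ w ^ 2 * f₂ w) + c₂ * (f₁ w * f₂ w ^ 2)
            + c₃ * f₂ w ^ 3)
          (c₀ * (3 * f₁ z ^ 2 * deriv f₁ z)
            + c₁ * (2 * f₁ z * deriv f₁ z * f₂ z + f₁ z ^ 2 * deriv f₂ z)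
            + c₂ * (deriv f₁ z * f₂ z ^ 2 + 2 * f₁ z * f₂ z * deriv f₂ z)
            + c₃ * (3 * f₂ z ^ 2 * deriv f₂ z)) z := by
        have t0 := ((hA z hz).pow 3).const_mul c₀
        have t1 := (((hA z hz).pow 2).mul (hC z hz)).const_mul c₁
        have t2 := (((hA z hz).mul ((hC z hz).pow 2))).const_mul c₂
        have t3 := ((hC z hz).pow 3).const_mul c₃
        have h := ((t0.add t1).add t2).add t3
        refine h.congr_deriv ?_; simp only [Pi.mul_apply, Pi.pow_apply, Pi.add_apply, Pi.sub_apply, Nat.cast_ofNat]; ring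
      have hzero : deriv (fun w => c₀ * f₁ w ^ 3 + c₁ * (f₁ w ^ 2 * f₂ w)
          + c₂ * (f₁ w * f₂ w ^ 2) + c₃ * f₂ w ^ 3) z = 0 := by
        have heq : (fun w => c₀ * f₁ w ^ 3 + c₁ * (f₁ w ^ 2 * f₂ w)
            + c₂ * (f₁ w * f₂ w ^ 2) + c₃ * f₂ w ^ 3) =ᶠ[nhds z] (fun _ => 0) := by
          filter_upwards [hΩ.mem_nhds hz] with x hx using hrel x hx
        rw [heq.deriv_eq, deriv_const]
      rw [← hS.deriv]
      exact hzero
    -- second derived relation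
    have hE2 : ∀ z ∈ Ω, c₀ * (3 * f₁ z * (deriv f₁ z) ^ 2)
        + c₁ * ((deriv f₁ z) ^ 2 * f₂ z + 2 * f₁ z * deriv f₁ z * deriv f₂ z)
        + c₂ * (f₁ z * (deriv f₂ z) ^ 2 + 2 * f₂ z * deriv f₁ z * deriv f₂ z)
        + c₃ * (3 * f₂ z * (deriv f₂ z) ^ 2) = 0 := by
      intro z hz
      have hT : HasDerivAt
          (fun w => c₀ * (3 * f₁ w ^ 2 * deriv f₁ w)
            + c₁ * (2 * f₁ w * deriv f₁ w * f₂ w + f₁ w ^ 2 * deriv f₂ w)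
            + c₂ * (deriv f₁ w * f₂ w ^ 2 + 2 * f₁ w * f₂ w * deriv f₂ w)
            + c₃ * (3 * f₂ w ^ 2 * deriv f₂ w))
          (2 * (c₀ * (3 * f₁ z * (deriv f₁ z) ^ 2)
              + c₁ * ((deriv f₁ z) ^ 2 * f₂ z + 2 * f₁ z * deriv f₁ z * deriv f₂ z)
              + c₂ * (f₁ z * (deriv f₂ z) ^ 2 + 2 * f₂ z * deriv f₁ z * deriv f₂ z)
              + c₃ * (3 * f₂ z * (deriv f₂ z) ^ 2))
            - 3 * a z * (c₀ * f₁ z ^ 3 + c₁ * (f₁ z ^ 2 * f₂ z) + c₂ * (f₁ z * f₂ z ^ 2)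
              + c₃ * f₂ z ^ 3)) z := by
        have t0 := ((((hA z hz).pow 2).const_mul (3:ℂ)).mul (hB z hz)).const_mul c₀
        have t1 := (((((hA z hz).const_mul (2:ℂ)).mul (hB z hz)).mul (hC z hz)).add
          (((hA z hz).pow 2).mul (hD z hz))).const_mul c₁
        have t2 := (((hB z hz).mul ((hC z hz).pow 2)).add
          ((((hA z hz).const_mul (2:ℂ)).mul (hC z hz)).mul (hD z hz))).const_mul c₂
        have t3 := ((((hC z hz).pow 2).const_mul (3:ℂ)).mul (hD z hz)).const_mul c₃
        have h := ((t0.add t1).add t2).add t3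
        rw [hop₁ z hz, hop₂ z hz] at h
        refine h.congr_deriv ?_; simp only [Pi.mul_apply, Pi.pow_apply, Pi.add_apply, Pi.sub_apply, Nat.cast_ofNat]; ring
      have hzero : deriv (fun w => c₀ * (3 * f₁ w ^ 2 * deriv f₁ w)
          + c₁ * (2 * f₁ w * deriv f₁ w * f₂ w + f₁ w ^ 2 * deriv f₂ w)
          + c₂ * (deriv f₁ w * f₂ w ^ 2 + 2 * f₁ w * f₂ w * deriv f₂ w)
          + c₃ * (3 * f₂ w ^ 2 * deriv f₂ w)) z = 0 := by
        have heq : (fun w => c₀ * (3 * f₁ w ^ 2 * deriv f₁ w)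
            + c₁ * (2 * f₁ w * deriv f₁ w * f₂ w + f₁ w ^ 2 * deriv f₂ w)
            + c₂ * (deriv f₁ w * f₂ w ^ 2 + 2 * f₁ w * f₂ w * deriv f₂ w)
            + c₃ * (3 * f₂ w ^ 2 * deriv f₂ w)) =ᶠ[nhds z] (fun _ => 0) := by
          filter_upwards [hΩ.mem_nhds hz] with x hx using hE1 x hx
        rw [heq.deriv_eq, deriv_const]
      have hR : (2 * (c₀ * (3 * f₁ z * (deriv f₁ z) ^ 2)
          + c₁ * ((deriv f₁ z) ^ 2 * f₂ z + 2 * f₁ z * deriv f₁ z * deriv f₂ z)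
          + c₂ * (f₁ z * (deriv f₂ z) ^ 2 + 2 * f₂ z * deriv f₁ z * deriv f₂ z)
          + c₃ * (3 * f₂ z * (deriv f₂ z) ^ 2))
          - 3 * a z * (c₀ * f₁ z ^ 3 + c₁ * (f₁ z ^ 2 * f₂ z) + c₂ * (f₁ z * f₂ z ^ 2)
            + c₃ * f₂ z ^ 3)) = 0 := by
        rw [← hT.deriv]; exact hzero
      linear_combination (1/2 : ℂ) * hR + (3/2 : ℂ) * a z * hrel z hz
    -- third derived relation (only needed at z₀)
    have hE3 : c₀ * (deriv f₁ z₀) ^ 3 + c₁ * ((deriv f₁ z₀) ^ 2 * deriv f₂ z₀)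
        + c₂ * (deriv f₁ z₀ * (deriv f₂ z₀) ^ 2) + c₃ * (deriv f₂ z₀) ^ 3 = 0 := by
      have hT : HasDerivAt
          (fun w => c₀ * (3 * f₁ w * (deriv f₁ w) ^ 2)
            + c₁ * ((deriv f₁ w) ^ 2 * f₂ w + 2 * f₁ w * deriv f₁ w * deriv f₂ w)
            + c₂ * (f₁ w * (deriv f₂ w) ^ 2 + 2 * f₂ w * deriv f₁ w * deriv f₂ w)
            + c₃ * (3 * f₂ w * (deriv f₂ w) ^ 2))
          (3 * (c₀ * (deriv f₁ z₀) ^ 3 + c₁ * ((deriv f₁ z₀) ^ 2 * deriv f₂ z₀)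
              + c₂ * (deriv f₁ z₀ * (deriv f₂ z₀) ^ 2) + c₃ * (deriv f₂ z₀) ^ 3)
            - 2 * a z₀ * (c₀ * (3 * f₁ z₀ ^ 2 * deriv f₁ z₀)
              + c₁ * (2 * f₁ z₀ * deriv f₁ z₀ * f₂ z₀ + f₁ z₀ ^ 2 * deriv f₂ z₀)
              + c₂ * (deriv f₁ z₀ * f₂ z₀ ^ 2 + 2 * f₁ z₀ * f₂ z₀ * deriv f₂ z₀)
              + c₃ * (3 * f₂ z₀ ^ 2 * deriv f₂ z₀))) z₀ := by
        have t0 := (((hA z₀ hz₀).const_mul (3:ℂ)).mul ((hB z₀ hz₀).pow 2)).const_mul c₀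
        have t1 := ((((hB z₀ hz₀).pow 2).mul (hC z₀ hz₀)).add
          ((((hA z₀ hz₀).const_mul (2:ℂ)).mul (hB z₀ hz₀)).mul (hD z₀ hz₀))).const_mul c₁
        have t2 := (((hA z₀ hz₀).mul ((hD z₀ hz₀).pow 2)).add
          ((((hC z₀ hz₀).const_mul (2:ℂ)).mul (hB z₀ hz₀)).mul (hD z₀ hz₀))).const_mul c₂
        have t3 := (((hC z₀ hz₀).const_mul (3:ℂ)).mul ((hD z₀ hz₀).pow 2)).const_mul c₃
        have h := ((t0.add t1).add t2).add t3
        rw [hop₁ z₀ hz₀, hop₂ z₀ hz₀] at h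
        refine h.congr_deriv ?_; simp only [Pi.mul_apply, Pi.pow_apply, Pi.add_apply, Pi.sub_apply, Nat.cast_ofNat]; ring
      have hzero : deriv (fun w => c₀ * (3 * f₁ w * (deriv f₁ w) ^ 2)
          + c₁ * ((deriv f₁ w) ^ 2 * f₂ w + 2 * f₁ w * deriv f₁ w * deriv f₂ w)
          + c₂ * (f₁ w * (deriv f₂ w) ^ 2 + 2 * f₂ w * deriv f₁ w * deriv f₂ w)
          + c₃ * (3 * f₂ w * (deriv f₂ w) ^ 2)) z₀ = 0 := by
        have heq : (fun w => c₀ * (3 * f₁ w * (deriv f₁ w) ^ 2)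
            + c₁ * ((deriv f₁ w) ^ 2 * f₂ w + 2 * f₁ w * deriv f₁ w * deriv f₂ w)
            + c₂ * (f₁ w * (deriv f₂ w) ^ 2 + 2 * f₂ w * deriv f₁ w * deriv f₂ w)
            + c₃ * (3 * f₂ w * (deriv f₂ w) ^ 2)) =ᶠ[nhds z₀] (fun _ => 0) := by
          filter_upwards [hΩ.mem_nhds hz₀] with x hx using hE2 x hx
        rw [heq.deriv_eq, deriv_const]
      have hR : (3 * (c₀ * (deriv f₁ z₀) ^ 3 + c₁ * ((deriv f₁ z₀) ^ 2 * deriv f₂ z₀)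
          + c₂ * (deriv f₁ z₀ * (deriv f₂ z₀) ^ 2) + c₃ * (deriv f₂ z₀) ^ 3)
          - 2 * a z₀ * (c₀ * (3 * f₁ z₀ ^ 2 * deriv f₁ z₀)
            + c₁ * (2 * f₁ z₀ * deriv f₁ z₀ * f₂ z₀ + f₁ z₀ ^ 2 * deriv f₂ z₀)
            + c₂ * (deriv f₁ z₀ * f₂ z₀ ^ 2 + 2 * f₁ z₀ * f₂ z₀ * deriv f₂ z₀)
            + c₃ * (3 * f₂ z₀ ^ 2 * deriv f₂ z₀))) = 0 := by
        rw [← hT.deriv]; exact hzero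
      linear_combination (1/3 : ℂ) * hR + (2/3 : ℂ) * a z₀ * hE1 z₀ hz₀
    -- solve the linear system at z₀
    set u := f₁ z₀
    set v := f₂ z₀
    set U := deriv f₁ z₀
    set V := deriv f₂ z₀
    have h0 := hrel z₀ hz₀
    have h1 := hE1 z₀ hz₀
    have h2 := hE2 z₀ hz₀
    have h3 := hE3
    have hW3 : (u * V - v * U) ^ 3 ≠ 0 := pow_ne_zero _ hW
    have hc0 : c₀ * (u * V - v * U) ^ 3 = 0 := by
      linear_combination V ^ 3 * h0 - v * V ^ 2 * h1 + v ^ 2 * V * h2 - v ^ 3 * h3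
    have hc1 : c₁ * (u * V - v * U) ^ 3 = 0 := by
      linear_combination (-3 * U * V ^ 2) * h0 + (2 * v * U * V + u * V ^ 2) * h1
        + (-(v ^ 2 * U) - 2 * u * v * V) * h2 + 3 * u * v ^ 2 * h3
    have hc2 : c₂ * (u * V - v * U) ^ 3 = 0 := by
      linear_combination (3 * U ^ 2 * V) * h0 + (-(v * U ^ 2) - 2 * u * U * V) * h1
        + (2 * u * v * U + u ^ 2 * V) * h2 - 3 * u ^ 2 * v * h3
    have hc3 : c₃ * (u * V - v * U) ^ 3 = 0 := by
      linear_combination (-(U ^ 3)) * h0 + u * U ^ 2 * h1 - u ^ 2 * U * h2 + u ^ 3 * h3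
    exact ⟨by simpa [hW3] using mul_eq_zero.mp hc0 |>.resolve_right hW3,
      (mul_eq_zero.mp hc1).resolve_right hW3,
      (mul_eq_zero.mp hc2).resolve_right hW3,
      (mul_eq_zero.mp hc3).resolve_right hW3⟩
end

section
/- Let f₁, f₂ be linearly independent analytic solutions of f'' + a f = 0 on a simply connected domain Ω, with a analytic. For k ≥ 2, the functions f₁^{k-1}, f₁^{k-2}f₂, …, f₂^{k-1} are linearly independent solutions of a linear ODE of order k of the form f^{(k)} + a_{k-2} f^{(k-2)} + ⋯ + a₁ f' + a₀ f = 0 with analytic coefficients, and the coefficient of f^{(k-2)} is a_{k-2} = ((k-1)k(k+1)/6)·a. -/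
open Finset

noncomputable def Smono (f₁ f₂ : ℂ → ℂ) (e₁ e₂ e₃ e₄ : ℕ) : ℂ → ℂ :=
  fun z => f₁ z ^ e₁ * deriv f₁ z ^ e₂ * f₂ z ^ e₃ * deriv f₂ z ^ e₄

noncomputable def Sf (f₁ f₂ : ℂ → ℂ) (p q m : ℕ) : ℂ → ℂ :=
  fun z => ∑ r ∈ range (m+1),
    ((m.choose r * p.descFactorial r * q.descFactorial (m - r) : ℕ) : ℂ) *
      Smono f₁ f₂ (p - r) r (q - (m - r)) (m - r) z

noncomputable def cC (a : ℂ → ℂ) (n : ℕ) : ℕ → ℕ → ℂ → ℂ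
  | 0 => fun i => if i = 0 then (fun _ => 1) else (fun _ => 0)
  | 1 => fun i => if i = 1 then (fun _ => 1) else (fun _ => 0)
  | (m+2) => fun i z =>
      deriv (cC a n (m+1) i) z +
      (if i = 0 then 0 else cC a n (m+1) (i-1) z) +
      (((m:ℂ)+1) * ((n:ℂ) - (m:ℂ))) * (a z * cC a n m i z)

lemma cC_step (a : ℂ → ℂ) (n m i : ℕ) : cC a n (m+2) i = fun z =>
      deriv (cC a n (m+1) i) z +
      (if i = 0 then 0 else cC a n (m+1) (i-1) z) +
      (((m:ℂ)+1) * ((n:ℂ) - (m:ℂ))) * (a z * cC a n m i z) := rfl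

lemma cC_zero' (a : ℂ → ℂ) (n i : ℕ) (hi : i ≠ 0) : cC a n 0 i = fun _ => 0 := by
  simp [cC, hi]

lemma cC_one (a : ℂ → ℂ) (n i : ℕ) (hi : i ≠ 1) : cC a n 1 i = fun _ => 0 := by
  simp [cC, hi]

lemma cC_zero_of_lt (a : ℂ → ℂ) (n : ℕ) : ∀ m i, m < i → cC a n m i = fun _ => 0 := by
  intro m
  induction m using Nat.strong_induction_on with
  | _ m ih =>
    match m with
    | 0 => intro i hi; exact cC_zero' a n i (by omega)
    | 1 => intro i hi; exact cC_one a n i (by omega)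
    | (m+2) =>
      intro i hi
      rw [cC_step, ih (m+1) (by omega) i (by omega), ih m (by omega) i (by omega),
        ih (m+1) (by omega) (i-1) (by omega)]
      have h3 : i ≠ 0 := by omega
      simp [h3]

lemma cC_diag (a : ℂ → ℂ) (n : ℕ) : ∀ m, cC a n m m = fun _ => 1 := by
  intro m
  induction m using Nat.strong_induction_on with
  | _ m ih =>
    match m with
    | 0 => simp [cC]
    | 1 => simp [cC]
    | (m+2) =>
      rw [cC_step, cC_zero_of_lt a n (m+1) (m+2) (by omega),
        cC_zero_of_lt a n m (m+2) (by omega)]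
      have h4 : cC a n (m+1) (m+1) = fun _ => 1 := ih (m+1) (by omega)
      simp [show m+2-1 = m+1 from rfl, h4]

lemma cC_subdiag (a : ℂ → ℂ) (n : ℕ) : ∀ m, cC a n (m+1) m = fun _ => 0 := by
  intro m
  induction m using Nat.strong_induction_on with
  | _ m ih =>
    match m with
    | 0 => exact cC_one a n 0 (by omega)
    | (m+1) =>
      show cC a n (m+2) (m+1) = fun _ => 0
      rw [cC_step, cC_diag a n (m+1), cC_zero_of_lt a n m (m+1) (by omega)]
      have h4 : cC a n (m+1) m = fun _ => 0 := ih m (by omega)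
      simp [show m+1-1 = m from rfl, h4]

noncomputable def gam (n m : ℕ) : ℂ :=
  ((n:ℂ)+1) * m * ((m:ℂ)-1) / 2 - ((m:ℂ)-1) * m * (2*(m:ℂ)-1) / 6

lemma cC_subsub (a : ℂ → ℂ) (n : ℕ) : ∀ m, cC a n (m+2) m = fun z => gam n (m+2) * a z := by
  intro m
  induction m using Nat.strong_induction_on with
  | _ m ih =>
    match m with
    | 0 =>
      rw [cC_step, cC_one a n 0 (by omega), cC_diag a n 0]
      funext z
      simp only [deriv_const', gam]
      norm_num
    | (m+1) =>
      show cC a n (m+3) (m+1) = fun z => gam n (m+3) * a z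
      rw [cC_step, cC_subdiag a n (m+1), cC_diag a n (m+1)]
      have h4 : cC a n (m+2) m = fun z => gam n (m+2) * a z := ih m (by omega)
      funext z
      have : m + 1 ≠ 0 := by omega
      simp only [this, if_false, show m+1-1 = m from rfl, h4, deriv_const']
      simp only [gam]
      push_cast
      ring


section A
variable {Ω : Set ℂ} {a f₁ f₂ : ℂ → ℂ}

lemma analytic_iteratedDeriv (hf : AnalyticOnNhd ℂ f₁ Ω) (i : ℕ) :
    AnalyticOnNhd ℂ (iteratedDeriv i f₁) Ω := by
  induction i with
  | zero => simpa [iteratedDeriv_zero] using hf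
  | succ i ih => rw [iteratedDeriv_succ]; exact ih.deriv

lemma Smono_analytic (hf₁ : AnalyticOnNhd ℂ f₁ Ω) (hf₂ : AnalyticOnNhd ℂ f₂ Ω)
    (e₁ e₂ e₃ e₄ : ℕ) : AnalyticOnNhd ℂ (Smono f₁ f₂ e₁ e₂ e₃ e₄) Ω := by
  exact (((hf₁.pow e₁).mul ((hf₁.deriv).pow e₂)).mul (hf₂.pow e₃)).mul ((hf₂.deriv).pow e₄)

lemma Smono_deriv (hf₁ : AnalyticOnNhd ℂ f₁ Ω) (hf₂ : AnalyticOnNhd ℂ f₂ Ω)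
    {z : ℂ} (hz : z ∈ Ω)
    (h1 : deriv (deriv f₁) z = -(a z * f₁ z)) (h2 : deriv (deriv f₂) z = -(a z * f₂ z))
    (e₁ e₂ e₃ e₄ : ℕ) :
    deriv (Smono f₁ f₂ e₁ e₂ e₃ e₄) z =
      (e₁:ℂ) * f₁ z ^ (e₁-1) * deriv f₁ z * (deriv f₁ z ^ e₂ * f₂ z ^ e₃ * deriv f₂ z ^ e₄)
    + (e₂:ℂ) * deriv f₁ z ^ (e₂-1) * (-(a z * f₁ z)) * (f₁ z ^ e₁ * f₂ z ^ e₃ * deriv f₂ z ^ e₄)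
    + (e₃:ℂ) * f₂ z ^ (e₃-1) * deriv f₂ z * (f₁ z ^ e₁ * deriv f₁ z ^ e₂ * deriv f₂ z ^ e₄)
    + (e₄:ℂ) * deriv f₂ z ^ (e₄-1) * (-(a z * f₂ z)) * (f₁ z ^ e₁ * deriv f₁ z ^ e₂ * f₂ z ^ e₃) := by
  have hA : HasDerivAt (fun w => f₁ w ^ e₁) ((e₁:ℂ) * f₁ z ^ (e₁-1) * deriv f₁ z) z :=
    ((hf₁ z hz).differentiableAt.hasDerivAt).pow e₁
  have hB : HasDerivAt (fun w => deriv f₁ w ^ e₂)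
      ((e₂:ℂ) * deriv f₁ z ^ (e₂-1) * (-(a z * f₁ z))) z := by
    have := ((hf₁.deriv z hz).differentiableAt.hasDerivAt).pow e₂
    rwa [h1] at this
  have hC : HasDerivAt (fun w => f₂ w ^ e₃) ((e₃:ℂ) * f₂ z ^ (e₃-1) * deriv f₂ z) z :=
    ((hf₂ z hz).differentiableAt.hasDerivAt).pow e₃
  have hD : HasDerivAt (fun w => deriv f₂ w ^ e₄)
      ((e₄:ℂ) * deriv f₂ z ^ (e₄-1) * (-(a z * f₂ z))) z := by
    have := ((hf₂.deriv z hz).differentiableAt.hasDerivAt).pow e₄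
    rwa [h2] at this
  have h := (((hA.mul hB).mul hC).mul hD).deriv
  rw [show Smono f₁ f₂ e₁ e₂ e₃ e₄ = fun w => f₁ w ^ e₁ * deriv f₁ w ^ e₂ * f₂ w ^ e₃ * deriv f₂ w ^ e₄ from rfl]
  exact h.trans (by simp only [Pi.mul_apply]; ring)

end A


-- per-index lemma for group 1 (the f'-increasing terms)
lemma alg1_index (x₁ y₁ x₂ y₂ : ℂ) (p q m r : ℕ) (hr : r ≤ m) :
    ((m.choose r * p.descFactorial r * q.descFactorial (m-r) : ℕ) : ℂ) *
      (((p-r : ℕ):ℂ) * x₁^(p-r-1) * y₁ * (y₁^r * x₂^(q-(m-r)) * y₂^(m-r)))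
    + ((m.choose (r+1) * p.descFactorial (r+1) * q.descFactorial (m-(r+1)) : ℕ) : ℂ) *
      (((q-(m-(r+1)) : ℕ):ℂ) * x₂^(q-(m-(r+1))-1) * y₂ *
        (x₁^(p-(r+1)) * y₁^(r+1) * y₂^(m-(r+1))))
    = (((m+1).choose (r+1) * p.descFactorial (r+1) * q.descFactorial (m+1-(r+1)) : ℕ) : ℂ) *
      (x₁^(p-(r+1)) * y₁^(r+1) * x₂^(q-(m+1-(r+1))) * y₂^(m+1-(r+1))) := by
  rcases Nat.lt_or_ge r m with hlt | hge
  · -- r < m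
    obtain ⟨u, rfl⟩ : ∃ u, m = r + u + 1 := ⟨m - r - 1, by omega⟩
    rw [show r+u+1-r = u+1 by omega, show r+u+1-(r+1) = u by omega,
        show r+u+1+1-(r+1) = u+1 by omega]
    have hp : (p.descFactorial (r+1) : ℂ) = ((p-r:ℕ):ℂ) * (p.descFactorial r : ℂ) := by
      rw [Nat.descFactorial_succ]; push_cast; ring
    have hq : (q.descFactorial (u+1) : ℂ) = ((q-u:ℕ):ℂ) * (q.descFactorial u : ℂ) := by
      rw [Nat.descFactorial_succ]; push_cast; ring
    have hc : ((r+u+1+1).choose (r+1) : ℂ)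
        = ((r+u+1).choose r : ℂ) + ((r+u+1).choose (r+1) : ℂ) := by
      rw [Nat.choose_succ_succ (r+u+1) r]; push_cast; ring
    have hx1 : x₁^(p-(r+1)) = x₁^(p-r-1) := rfl
    have hy1 : y₁^(r+1) = y₁^r * y₁ := pow_succ y₁ r
    have hy2 : y₂^(u+1) = y₂^u * y₂ := pow_succ y₂ u
    have hx2 : x₂^(q-(u+1)) = x₂^(q-u-1) := rfl
    push_cast
    rw [hp, hq, hc, hx1, hy1, hy2, hx2]
    ring
  · -- r = m
    obtain rfl : m = r := le_antisymm hge hr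
    rw [show m-m = 0 by omega, show m - (m+1) = 0 by omega, show m+1-(m+1) = 0 by omega,
        Nat.choose_succ_self m]
    have hp : (p.descFactorial (m+1) : ℂ) = ((p-m:ℕ):ℂ) * (p.descFactorial m : ℂ) := by
      rw [Nat.descFactorial_succ]; push_cast; ring
    have hy1 : y₁^(m+1) = y₁^m * y₁ := pow_succ y₁ m
    push_cast
    rw [hp, hy1]
    simp only [Nat.choose_self, Nat.cast_one, show x₁^(p-(m+1)) = x₁^(p-m-1) from rfl]
    ring


lemma alg2_index (x₁ y₁ x₂ y₂ A : ℂ) (p q m r : ℕ) (hr : r ≤ m) :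
    (((m+1).choose (r+1) * p.descFactorial (r+1) * q.descFactorial (m+1-(r+1)) : ℕ) : ℂ) *
      (((r+1 : ℕ):ℂ) * y₁^(r+1-1) * (-(A * x₁)) *
        (x₁^(p-(r+1)) * x₂^(q-(m+1-(r+1))) * y₂^(m+1-(r+1))))
    + (((m+1).choose r * p.descFactorial r * q.descFactorial (m+1-r) : ℕ) : ℂ) *
      (((m+1-r : ℕ):ℂ) * y₂^(m+1-r-1) * (-(A * x₂)) *
        (x₁^(p-r) * y₁^r * x₂^(q-(m+1-r))))
    = -(((m:ℂ)+1) * ((p:ℂ)+(q:ℂ)-(m:ℂ))) * A *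
      (((m.choose r * p.descFactorial r * q.descFactorial (m-r) : ℕ) : ℂ) *
        (x₁^(p-r) * y₁^r * x₂^(q-(m-r)) * y₂^(m-r))) := by
  obtain ⟨s, rfl⟩ : ∃ s, m = r + s := ⟨m - r, by omega⟩
  simp only [show r+s+1-(r+1) = s by omega, show r+s+1-r = s+1 by omega,
    show r+s-r = s by omega, show r+1-1 = r by omega, show s+1-1 = s by omega]
  have HA1 : ((r:ℂ)+1) * ((r+s+1).choose (r+1) : ℂ)
      = ((r:ℂ)+(s:ℂ)+1) * ((r+s).choose r : ℂ) := by
    have h2 : (r+s+1) * ((r+s).choose r) = ((r+s+1).choose (r+1)) * (r+1) :=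
      Nat.add_one_mul_choose_eq (r+s) r
    have h3 := congrArg (fun t : ℕ => (t : ℂ)) h2
    push_cast at h3
    linear_combination (-1 : ℂ) * h3
  have HA2 : ((s:ℂ)+1) * ((r+s+1).choose r : ℂ)
      = ((r:ℂ)+(s:ℂ)+1) * ((r+s).choose r : ℂ) := by
    have e1 : (r+s+1).choose r = (r+s+1).choose (s+1) := by
      rw [← Nat.choose_symm (by omega : s+1 ≤ r+s+1)]
      congr 1; omega
    have e2 : (r+s).choose r = (r+s).choose s := by
      rw [← Nat.choose_symm (by omega : s ≤ r+s)]
      congr 1; omega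
    have h2 : (r+s+1) * ((r+s).choose s) = ((r+s+1).choose (s+1)) * (s+1) :=
      Nat.add_one_mul_choose_eq (r+s) s
    have h3 := congrArg (fun t : ℕ => (t : ℂ)) h2
    push_cast at h3
    rw [e1, e2]
    push_cast
    linear_combination (-1 : ℂ) * h3
  rcases lt_trichotomy r p with h1 | h1 | h1
  · obtain ⟨d, rfl⟩ : ∃ d, p = r + d + 1 := ⟨p - r - 1, by omega⟩
    simp only [show r+d+1-(r+1) = d by omega, show r+d+1-r = d+1 by omega]
    have HP : (((r+d+1).descFactorial (r+1) : ℕ) : ℂ)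
        = ((d:ℂ)+1) * (((r+d+1).descFactorial r : ℕ) : ℂ) := by
      rw [Nat.descFactorial_succ, show r+d+1-r = d+1 by omega]; push_cast; ring
    rcases lt_trichotomy s q with h2 | h2 | h2
    · obtain ⟨e, rfl⟩ : ∃ e, q = s + e + 1 := ⟨q - s - 1, by omega⟩
      simp only [show s+e+1-(s+1) = e by omega, show s+e+1-s = e+1 by omega]
      have HQ : (((s+e+1).descFactorial (s+1) : ℕ) : ℂ)
          = ((e:ℂ)+1) * (((s+e+1).descFactorial s : ℕ) : ℂ) := by
        rw [Nat.descFactorial_succ, show s+e+1-s = e+1 by omega]; push_cast; ring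
      push_cast
      rw [HP, HQ]
      push_cast at HA1 HA2
      linear_combination
        (-(((d:ℂ)+1) * ((r+d+1).descFactorial r : ℂ) * ((s+e+1).descFactorial s : ℂ) *
          (y₁^r * y₂^s * x₁^(d+1) * x₂^(e+1) * A))) * HA1 +
        (-(((e:ℂ)+1) * ((r+d+1).descFactorial r : ℂ) * ((s+e+1).descFactorial s : ℂ) *
          (y₁^r * y₂^s * x₁^(d+1) * x₂^(e+1) * A))) * HA2
    · -- s = q : T4 vanishes
      subst h2
      have Z : ((s.descFactorial (s+1) : ℕ) : ℂ) = 0 := by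
        norm_cast; simp [Nat.descFactorial_eq_zero_iff_lt]
      push_cast
      rw [HP, Z]
      push_cast at HA1
      linear_combination
        (-(((d:ℂ)+1) * ((r+d+1).descFactorial r : ℂ) * ((s.descFactorial s : ℕ) : ℂ) *
          (y₁^r * y₂^s * x₁^(d+1) * x₂^(s-s) * A))) * HA1
    · -- s > q : everything vanishes
      have Z1 : ((q.descFactorial s : ℕ) : ℂ) = 0 := by
        norm_cast; simp [Nat.descFactorial_eq_zero_iff_lt]; omega
      have Z2 : ((q.descFactorial (s+1) : ℕ) : ℂ) = 0 := by
        norm_cast; simp [Nat.descFactorial_eq_zero_iff_lt]; omega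
      push_cast
      rw [Z1, Z2]
      ring
  · -- r = p : T2 vanishes
    subst h1
    have Z : ((r.descFactorial (r+1) : ℕ) : ℂ) = 0 := by
      norm_cast; simp [Nat.descFactorial_eq_zero_iff_lt]
    rcases lt_trichotomy s q with h2 | h2 | h2
    · obtain ⟨e, rfl⟩ : ∃ e, q = s + e + 1 := ⟨q - s - 1, by omega⟩
      simp only [show s+e+1-(s+1) = e by omega, show s+e+1-s = e+1 by omega]
      have HQ : (((s+e+1).descFactorial (s+1) : ℕ) : ℂ)
          = ((e:ℂ)+1) * (((s+e+1).descFactorial s : ℕ) : ℂ) := by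
        rw [Nat.descFactorial_succ, show s+e+1-s = e+1 by omega]; push_cast; ring
      push_cast
      rw [HQ, Z]
      push_cast at HA2
      linear_combination
        (-(((e:ℂ)+1) * ((r.descFactorial r : ℕ) : ℂ) * ((s+e+1).descFactorial s : ℂ) *
          (y₁^r * y₂^s * x₁^(r-r) * x₂^(e+1) * A))) * HA2
    · subst h2
      have Z2 : ((s.descFactorial (s+1) : ℕ) : ℂ) = 0 := by
        norm_cast; simp [Nat.descFactorial_eq_zero_iff_lt]
      push_cast
      rw [Z, Z2]
      ring
    · have Z1 : ((q.descFactorial s : ℕ) : ℂ) = 0 := by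
        norm_cast; simp [Nat.descFactorial_eq_zero_iff_lt]; omega
      have Z2 : ((q.descFactorial (s+1) : ℕ) : ℂ) = 0 := by
        norm_cast; simp [Nat.descFactorial_eq_zero_iff_lt]; omega
      push_cast
      rw [Z1, Z2]
      ring
  · -- r > p : everything vanishes
    have Z1 : ((p.descFactorial r : ℕ) : ℂ) = 0 := by
      norm_cast; simp [Nat.descFactorial_eq_zero_iff_lt]; omega
    have Z2 : ((p.descFactorial (r+1) : ℕ) : ℂ) = 0 := by
      norm_cast; simp [Nat.descFactorial_eq_zero_iff_lt]; omega
    push_cast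
    rw [Z1, Z2]
    ring

lemma reindex1 (F G H : ℕ → ℂ) (m : ℕ) (h0 : G 0 = H 0) (hzero : G (m+1) = 0)
    (hstep : ∀ r, r ≤ m → F r + G (r+1) = H (r+1)) :
    ∑ r ∈ range (m+1), (F r + G r) = ∑ r ∈ range (m+1+1), H r := by
  rw [Finset.sum_range_succ' H (m+1), Finset.sum_add_distrib,
      Finset.sum_range_succ' G m, ← h0]
  have he : ∑ r ∈ range m, G (r+1) = ∑ r ∈ range (m+1), G (r+1) := by
    rw [Finset.sum_range_succ, hzero, add_zero]
  rw [he, ← add_assoc, ← Finset.sum_add_distrib]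
  congr 1
  refine Finset.sum_congr rfl fun r hr => hstep r ?_
  have := Finset.mem_range.mp hr; omega

lemma reindex2 (F G H : ℕ → ℂ) (m : ℕ) (hF0 : F 0 = 0) (hG : G (m+1) = 0)
    (hstep : ∀ r, r ≤ m → F (r+1) + G r = H r) :
    ∑ r ∈ range (m+1+1), (F r + G r) = ∑ r ∈ range (m+1), H r := by
  rw [Finset.sum_add_distrib, Finset.sum_range_succ' F (m+1), hF0, add_zero,
      Finset.sum_range_succ G (m+1), hG, add_zero, ← Finset.sum_add_distrib]
  refine Finset.sum_congr rfl fun r hr => hstep r ?_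
  have := Finset.mem_range.mp hr; omega



section B
variable {Ω : Set ℂ} {a f₁ f₂ : ℂ → ℂ}

lemma Sf_deriv (hf₁ : AnalyticOnNhd ℂ f₁ Ω) (hf₂ : AnalyticOnNhd ℂ f₂ Ω)
    {z : ℂ} (hz : z ∈ Ω)
    (h1 : deriv (deriv f₁) z = -(a z * f₁ z)) (h2 : deriv (deriv f₂) z = -(a z * f₂ z))
    (p q m : ℕ) :
    deriv (Sf f₁ f₂ p q (m+1)) z
      = Sf f₁ f₂ p q (m+1+1) z
        - ((m:ℂ)+1) * ((p:ℂ)+(q:ℂ)-(m:ℂ)) * (a z * Sf f₁ f₂ p q m z) := by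
  have hstep1 : deriv (Sf f₁ f₂ p q (m+1)) z
      = ∑ r ∈ Finset.range (m+1+1),
          (((m+1).choose r * p.descFactorial r * q.descFactorial (m+1-r) : ℕ) : ℂ) *
            deriv (Smono f₁ f₂ (p-r) r (q-(m+1-r)) (m+1-r)) z := by
    rw [show Sf f₁ f₂ p q (m+1) = fun y => ∑ r ∈ Finset.range (m+1+1),
      (((m+1).choose r * p.descFactorial r * q.descFactorial (m+1-r) : ℕ) : ℂ) *
        Smono f₁ f₂ (p-r) r (q-(m+1-r)) (m+1-r) y from rfl]
    rw [deriv_fun_sum (fun r _ =>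
      ((Smono_analytic hf₁ hf₂ (p-r) r (q-(m+1-r)) (m+1-r) z hz).differentiableAt).const_mul _)]
    exact Finset.sum_congr rfl fun r _ => deriv_const_mul _
      ((Smono_analytic hf₁ hf₂ (p-r) r (q-(m+1-r)) (m+1-r) z hz).differentiableAt)
  have hterm : ∀ r ∈ Finset.range (m+1+1),
      (((m+1).choose r * p.descFactorial r * q.descFactorial (m+1-r) : ℕ) : ℂ) *
        deriv (Smono f₁ f₂ (p-r) r (q-(m+1-r)) (m+1-r)) z
      = ((((m+1).choose r * p.descFactorial r * q.descFactorial (m+1-r) : ℕ) : ℂ) *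
           (((p-r : ℕ):ℂ) * f₁ z ^ (p-r-1) * deriv f₁ z *
             (deriv f₁ z ^ r * f₂ z ^ (q-(m+1-r)) * deriv f₂ z ^ (m+1-r)))
         + (((m+1).choose r * p.descFactorial r * q.descFactorial (m+1-r) : ℕ) : ℂ) *
           (((q-(m+1-r) : ℕ):ℂ) * f₂ z ^ (q-(m+1-r)-1) * deriv f₂ z *
             (f₁ z ^ (p-r) * deriv f₁ z ^ r * deriv f₂ z ^ (m+1-r))))
      + ((((m+1).choose r * p.descFactorial r * q.descFactorial (m+1-r) : ℕ) : ℂ) *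
           (((r : ℕ):ℂ) * deriv f₁ z ^ (r-1) * (-(a z * f₁ z)) *
             (f₁ z ^ (p-r) * f₂ z ^ (q-(m+1-r)) * deriv f₂ z ^ (m+1-r)))
         + (((m+1).choose r * p.descFactorial r * q.descFactorial (m+1-r) : ℕ) : ℂ) *
           (((m+1-r : ℕ):ℂ) * deriv f₂ z ^ (m+1-r-1) * (-(a z * f₂ z)) *
             (f₁ z ^ (p-r) * deriv f₁ z ^ r * f₂ z ^ (q-(m+1-r))))) := by
    intro r _
    rw [Smono_deriv hf₁ hf₂ hz h1 h2 (p-r) r (q-(m+1-r)) (m+1-r)]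
    ring
  have hg1 : ∑ r ∈ Finset.range (m+1+1),
      ((((m+1).choose r * p.descFactorial r * q.descFactorial (m+1-r) : ℕ) : ℂ) *
         (((p-r : ℕ):ℂ) * f₁ z ^ (p-r-1) * deriv f₁ z *
           (deriv f₁ z ^ r * f₂ z ^ (q-(m+1-r)) * deriv f₂ z ^ (m+1-r)))
       + (((m+1).choose r * p.descFactorial r * q.descFactorial (m+1-r) : ℕ) : ℂ) *
         (((q-(m+1-r) : ℕ):ℂ) * f₂ z ^ (q-(m+1-r)-1) * deriv f₂ z *
           (f₁ z ^ (p-r) * deriv f₁ z ^ r * deriv f₂ z ^ (m+1-r))))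
      = Sf f₁ f₂ p q (m+1+1) z := by
    have := reindex1
      (fun r => (((m+1).choose r * p.descFactorial r * q.descFactorial (m+1-r) : ℕ) : ℂ) *
         (((p-r : ℕ):ℂ) * f₁ z ^ (p-r-1) * deriv f₁ z *
           (deriv f₁ z ^ r * f₂ z ^ (q-(m+1-r)) * deriv f₂ z ^ (m+1-r))))
      (fun r => (((m+1).choose r * p.descFactorial r * q.descFactorial (m+1-r) : ℕ) : ℂ) *
         (((q-(m+1-r) : ℕ):ℂ) * f₂ z ^ (q-(m+1-r)-1) * deriv f₂ z *
           (f₁ z ^ (p-r) * deriv f₁ z ^ r * deriv f₂ z ^ (m+1-r))))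
      (fun r => (((m+1+1).choose r * p.descFactorial r * q.descFactorial (m+1+1-r) : ℕ) : ℂ) *
         (f₁ z ^ (p-r) * deriv f₁ z ^ r * f₂ z ^ (q-(m+1+1-r)) * deriv f₂ z ^ (m+1+1-r)))
      (m+1) ?_ ?_ ?_
    · exact this
    · -- h0
      have HQ : ((q.descFactorial (m+1+1) : ℕ) : ℂ)
          = ((q-(m+1) : ℕ):ℂ) * ((q.descFactorial (m+1) : ℕ) : ℂ) := by
        rw [Nat.descFactorial_succ]; push_cast; ring
      simp only [Nat.choose_zero_right, Nat.descFactorial_zero, Nat.sub_zero, one_mul,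
        Nat.mul_one, pow_zero]
      push_cast
      rw [HQ, show f₂ z ^ (q-(m+1+1)) = f₂ z ^ (q-(m+1)-1) from rfl]
      ring
    · -- hzero
      have : (m+1).choose (m+1+1) = 0 := Nat.choose_eq_zero_of_lt (by omega)
      simp [this]
    · -- hstep
      intro r hr
      exact alg1_index (f₁ z) (deriv f₁ z) (f₂ z) (deriv f₂ z) p q (m+1) r hr
  have hg2 : ∑ r ∈ Finset.range (m+1+1),
      ((((m+1).choose r * p.descFactorial r * q.descFactorial (m+1-r) : ℕ) : ℂ) *
         (((r : ℕ):ℂ) * deriv f₁ z ^ (r-1) * (-(a z * f₁ z)) *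
           (f₁ z ^ (p-r) * f₂ z ^ (q-(m+1-r)) * deriv f₂ z ^ (m+1-r)))
       + (((m+1).choose r * p.descFactorial r * q.descFactorial (m+1-r) : ℕ) : ℂ) *
         (((m+1-r : ℕ):ℂ) * deriv f₂ z ^ (m+1-r-1) * (-(a z * f₂ z)) *
           (f₁ z ^ (p-r) * deriv f₁ z ^ r * f₂ z ^ (q-(m+1-r)))))
      = -(((m:ℂ)+1) * ((p:ℂ)+(q:ℂ)-(m:ℂ))) * a z * Sf f₁ f₂ p q m z := by
    have := reindex2
      (fun r => (((m+1).choose r * p.descFactorial r * q.descFactorial (m+1-r) : ℕ) : ℂ) *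
         (((r : ℕ):ℂ) * deriv f₁ z ^ (r-1) * (-(a z * f₁ z)) *
           (f₁ z ^ (p-r) * f₂ z ^ (q-(m+1-r)) * deriv f₂ z ^ (m+1-r))))
      (fun r => (((m+1).choose r * p.descFactorial r * q.descFactorial (m+1-r) : ℕ) : ℂ) *
         (((m+1-r : ℕ):ℂ) * deriv f₂ z ^ (m+1-r-1) * (-(a z * f₂ z)) *
           (f₁ z ^ (p-r) * deriv f₁ z ^ r * f₂ z ^ (q-(m+1-r)))))
      (fun r => -(((m:ℂ)+1) * ((p:ℂ)+(q:ℂ)-(m:ℂ))) * a z *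
         (((m.choose r * p.descFactorial r * q.descFactorial (m-r) : ℕ) : ℂ) *
           (f₁ z ^ (p-r) * deriv f₁ z ^ r * f₂ z ^ (q-(m-r)) * deriv f₂ z ^ (m-r))))
      m ?_ ?_ ?_
    · rw [this, ← Finset.mul_sum]
      rfl
    · simp
    · simp [Nat.sub_self]
    · intro r hr
      exact alg2_index (f₁ z) (deriv f₁ z) (f₂ z) (deriv f₂ z) (a z) p q m r hr
  calc deriv (Sf f₁ f₂ p q (m+1)) z
      = ∑ r ∈ Finset.range (m+1+1),
          (((m+1).choose r * p.descFactorial r * q.descFactorial (m+1-r) : ℕ) : ℂ) *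
            deriv (Smono f₁ f₂ (p-r) r (q-(m+1-r)) (m+1-r)) z := hstep1
    _ = _ := Finset.sum_congr rfl hterm
    _ = _ + _ := Finset.sum_add_distrib
    _ = Sf f₁ f₂ p q (m+1+1) z
        + (-(((m:ℂ)+1) * ((p:ℂ)+(q:ℂ)-(m:ℂ))) * a z * Sf f₁ f₂ p q m z) := by
        rw [hg1, hg2]
    _ = Sf f₁ f₂ p q (m+1+1) z
        - ((m:ℂ)+1) * ((p:ℂ)+(q:ℂ)-(m:ℂ)) * (a z * Sf f₁ f₂ p q m z) := by ring

end B


section C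
variable {Ω : Set ℂ} {a f₁ f₂ : ℂ → ℂ}

lemma cC_analytic (ha : AnalyticOnNhd ℂ a Ω) (n : ℕ) :
    ∀ m i, AnalyticOnNhd ℂ (cC a n m i) Ω := by
  intro m
  induction m using Nat.strong_induction_on with
  | _ m ih =>
    match m with
    | 0 =>
      intro i
      by_cases hi : i = 0
      · subst hi; show AnalyticOnNhd ℂ (fun _ => (1:ℂ)) Ω; exact analyticOnNhd_const
      · rw [cC_zero' a n i hi]; exact analyticOnNhd_const
    | 1 =>
      intro i
      by_cases hi : i = 1
      · subst hi; show AnalyticOnNhd ℂ (fun _ => (1:ℂ)) Ω; exact analyticOnNhd_const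
      · rw [cC_one a n i hi]; exact analyticOnNhd_const
    | (m+2) =>
      intro i
      rw [cC_step]
      have A1 : AnalyticOnNhd ℂ (fun z => deriv (cC a n (m+1) i) z) Ω :=
        (ih (m+1) (by omega) i).deriv
      have A2 : AnalyticOnNhd ℂ (fun z => (if i = 0 then 0 else cC a n (m+1) (i-1) z)) Ω := by
        by_cases hi : i = 0
        · simp only [hi, if_true]; exact analyticOnNhd_const
        · simp only [hi, if_false]; exact ih (m+1) (by omega) (i-1)
      have A3 : AnalyticOnNhd ℂ
          (fun z => (((m:ℂ)+1) * ((n:ℂ) - (m:ℂ))) * (a z * cC a n m i z)) Ω :=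
        analyticOnNhd_const.mul (ha.mul (ih m (by omega) i))
      exact (A1.add A2).add A3

lemma Sf_top (p q k : ℕ) (h : p + q + 1 = k) : Sf f₁ f₂ p q k = fun _ => (0:ℂ) := by
  funext z
  show (∑ r ∈ Finset.range (k+1),
    ((k.choose r * p.descFactorial r * q.descFactorial (k - r) : ℕ) : ℂ) *
      Smono f₁ f₂ (p - r) r (q - (k - r)) (k - r) z) = 0
  apply Finset.sum_eq_zero
  intro r hr
  have hr' := Finset.mem_range.mp hr
  by_cases hp : p < r
  · have : p.descFactorial r = 0 := Nat.descFactorial_eq_zero_iff_lt.mpr hp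
    simp [this]
  · have hq : q < k - r := by omega
    have : q.descFactorial (k - r) = 0 := Nat.descFactorial_eq_zero_iff_lt.mpr hq
    simp [this]

lemma key (hΩ : IsOpen Ω) (ha : AnalyticOnNhd ℂ a Ω)
    (hf₁ : AnalyticOnNhd ℂ f₁ Ω) (hf₂ : AnalyticOnNhd ℂ f₂ Ω)
    (hode₁ : ∀ z ∈ Ω, deriv (deriv f₁) z = -(a z * f₁ z))
    (hode₂ : ∀ z ∈ Ω, deriv (deriv f₂) z = -(a z * f₂ z))
    (p q : ℕ) :
    ∀ m, ∀ z ∈ Ω,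
      (∑ i ∈ Finset.range (m+1),
        cC a (p+q) m i z * iteratedDeriv i (fun w => f₁ w ^ p * f₂ w ^ q) z)
      = Sf f₁ f₂ p q m z := by
  have hg : AnalyticOnNhd ℂ (fun w => f₁ w ^ p * f₂ w ^ q) Ω := (hf₁.pow p).mul (hf₂.pow q)
  intro m
  induction m using Nat.strong_induction_on with
  | _ m ih =>
    match m with
    | 0 =>
      intro z hz
      rw [Finset.sum_range_succ, Finset.sum_range_zero, zero_add, iteratedDeriv_zero,
        cC_diag a (p+q) 0]
      simp [Sf, Smono]
    | 1 =>
      intro z hz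
      rw [Finset.sum_range_succ, Finset.sum_range_one]
      have h0 : cC a (p+q) 1 0 = fun _ => 0 := cC_one a (p+q) 0 (by omega)
      rw [h0, cC_diag a (p+q) 1]
      simp only [iteratedDeriv_one, zero_mul, one_mul, zero_add]
      have hD : HasDerivAt (fun w => f₁ w ^ p * f₂ w ^ q)
          (((p:ℂ) * f₁ z ^ (p-1) * deriv f₁ z) * f₂ z ^ q
            + f₁ z ^ p * ((q:ℂ) * f₂ z ^ (q-1) * deriv f₂ z)) z :=
        (((hf₁ z hz).differentiableAt.hasDerivAt).pow p).mul
          (((hf₂ z hz).differentiableAt.hasDerivAt).pow q)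
      rw [hD.deriv]
      show _ = ∑ r ∈ Finset.range 2, _
      rw [Finset.sum_range_succ, Finset.sum_range_one]
      simp only [Smono]
      simp [Nat.descFactorial_one]
      ring
    | (m+2) =>
      intro z hz
      -- split the coefficient recursion
      have hsplit : ∀ i ∈ Finset.range (m+2+1),
          cC a (p+q) (m+2) i z * iteratedDeriv i (fun w => f₁ w ^ p * f₂ w ^ q) z
          = (deriv (cC a (p+q) (m+1) i) z * iteratedDeriv i (fun w => f₁ w ^ p * f₂ w ^ q) z
            + (if i = 0 then 0 else cC a (p+q) (m+1) (i-1) z) *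
                iteratedDeriv i (fun w => f₁ w ^ p * f₂ w ^ q) z)
            + (((m:ℂ)+1) * (((p+q:ℕ):ℂ) - (m:ℂ))) *
                (a z * cC a (p+q) m i z) * iteratedDeriv i (fun w => f₁ w ^ p * f₂ w ^ q) z := by
        intro i _
        rw [cC_step]
        ring
      rw [Finset.sum_congr rfl hsplit, Finset.sum_add_distrib, Finset.sum_add_distrib]
      -- third sum
      have hS3 : ∑ i ∈ Finset.range (m+2+1),
          (((m:ℂ)+1) * (((p+q:ℕ):ℂ) - (m:ℂ))) *
            (a z * cC a (p+q) m i z) * iteratedDeriv i (fun w => f₁ w ^ p * f₂ w ^ q) z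
          = (((m:ℂ)+1) * (((p+q:ℕ):ℂ) - (m:ℂ))) * (a z * Sf f₁ f₂ p q m z) := by
        have htrunc : ∑ i ∈ Finset.range (m+2+1),
            (((m:ℂ)+1) * (((p+q:ℕ):ℂ) - (m:ℂ))) *
              (a z * cC a (p+q) m i z) * iteratedDeriv i (fun w => f₁ w ^ p * f₂ w ^ q) z
            = ∑ i ∈ Finset.range (m+1),
            (((m:ℂ)+1) * (((p+q:ℕ):ℂ) - (m:ℂ))) *
              (a z * cC a (p+q) m i z) * iteratedDeriv i (fun w => f₁ w ^ p * f₂ w ^ q) z := by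
          symm
          apply Finset.sum_subset
          · intro x hx; simp only [Finset.mem_range] at *; omega
          · intro x hx hnx
            simp only [Finset.mem_range] at hx hnx
            rw [cC_zero_of_lt a (p+q) m x (by omega)]
            simp
        rw [htrunc, ← ih m (by omega) z hz, Finset.mul_sum, Finset.mul_sum]
        apply Finset.sum_congr rfl
        intro i _
        ring
      rw [hS3]
      -- first two sums = deriv of Sf (m+1)
      have hdiffc : ∀ i, DifferentiableAt ℂ (cC a (p+q) (m+1) i) z :=
        fun i => (cC_analytic ha (p+q) (m+1) i z hz).differentiableAt
      have hdiffg : ∀ i, DifferentiableAt ℂ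
          (iteratedDeriv i (fun w => f₁ w ^ p * f₂ w ^ q)) z :=
        fun i => (analytic_iteratedDeriv hg i z hz).differentiableAt
      have hEq : Set.EqOn
          (fun w => ∑ i ∈ Finset.range (m+1+1),
            cC a (p+q) (m+1) i w * iteratedDeriv i (fun w' => f₁ w' ^ p * f₂ w' ^ q) w)
          (Sf f₁ f₂ p q (m+1)) Ω := fun w hw => ih (m+1) (by omega) w hw
      have hd : deriv (fun w => ∑ i ∈ Finset.range (m+1+1),
            cC a (p+q) (m+1) i w * iteratedDeriv i (fun w' => f₁ w' ^ p * f₂ w' ^ q) w) z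
          = deriv (Sf f₁ f₂ p q (m+1)) z :=
        Filter.EventuallyEq.deriv_eq
          (Filter.eventuallyEq_of_mem (hΩ.mem_nhds hz) hEq)
      have hd2 : deriv (fun w => ∑ i ∈ Finset.range (m+1+1),
            cC a (p+q) (m+1) i w * iteratedDeriv i (fun w' => f₁ w' ^ p * f₂ w' ^ q) w) z
          = ∑ i ∈ Finset.range (m+1+1),
              (deriv (cC a (p+q) (m+1) i) z *
                  iteratedDeriv i (fun w => f₁ w ^ p * f₂ w ^ q) z
               + cC a (p+q) (m+1) i z *
                  iteratedDeriv (i+1) (fun w => f₁ w ^ p * f₂ w ^ q) z) := by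
        rw [deriv_fun_sum (A := fun i w => cC a (p+q) (m+1) i w *
          iteratedDeriv i (fun w' => f₁ w' ^ p * f₂ w' ^ q) w) (fun i _ => (hdiffc i).mul (hdiffg i))]
        apply Finset.sum_congr rfl
        intro i _
        rw [deriv_fun_mul (hdiffc i) (hdiffg i), iteratedDeriv_succ]
      have hS1 : ∑ i ∈ Finset.range (m+2+1),
          deriv (cC a (p+q) (m+1) i) z * iteratedDeriv i (fun w => f₁ w ^ p * f₂ w ^ q) z
          = ∑ i ∈ Finset.range (m+1+1),
          deriv (cC a (p+q) (m+1) i) z * iteratedDeriv i (fun w => f₁ w ^ p * f₂ w ^ q) z := by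
        rw [Finset.sum_range_succ (fun i =>
          deriv (cC a (p+q) (m+1) i) z * iteratedDeriv i (fun w => f₁ w ^ p * f₂ w ^ q) z) (m+2)]
        rw [cC_zero_of_lt a (p+q) (m+1) (m+2) (by omega)]
        simp
      have hS2 : ∑ i ∈ Finset.range (m+2+1),
          (if i = 0 then 0 else cC a (p+q) (m+1) (i-1) z) *
            iteratedDeriv i (fun w => f₁ w ^ p * f₂ w ^ q) z
          = ∑ i ∈ Finset.range (m+1+1),
              cC a (p+q) (m+1) i z * iteratedDeriv (i+1) (fun w => f₁ w ^ p * f₂ w ^ q) z := by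
        rw [Finset.sum_range_succ' (fun i =>
          (if i = 0 then 0 else cC a (p+q) (m+1) (i-1) z) *
            iteratedDeriv i (fun w => f₁ w ^ p * f₂ w ^ q) z) (m+2)]
        simp only [if_true, zero_mul, add_zero, Nat.add_sub_cancel]
        apply Finset.sum_congr rfl
        intro i _
        simp
      rw [hS1, hS2, ← Finset.sum_add_distrib, ← hd2, hd,
        Sf_deriv hf₁ hf₂ hz (hode₁ z hz) (hode₂ z hz) p q m]
      push_cast
      ring

end C


section D
variable {Ω : Set ℂ} {f₁ f₂ : ℂ → ℂ}

lemma poly_vanish (hconn : IsPreconnected Ω)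
    (hf₁ : AnalyticOnNhd ℂ f₁ Ω) (hf₂ : AnalyticOnNhd ℂ f₂ Ω)
    (hnc : ∀ r : ℂ, ¬ Set.EqOn (fun z => f₂ z - r * f₁ z) 0 Ω) :
    ∀ N : ℕ, ∀ P : Polynomial ℂ, P.natDegree ≤ N →
    ∀ z₁ : ℂ, ∀ r₁ : ℝ, 0 < r₁ → Metric.ball z₁ r₁ ⊆ Ω →
    (∀ z ∈ Metric.ball z₁ r₁, f₁ z ≠ 0) →
    (∀ z ∈ Metric.ball z₁ r₁, Polynomial.eval (f₂ z / f₁ z) P = 0) → P = 0 := by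
  intro N
  induction N with
  | zero =>
    intro P hP z₁ r₁ hr hsub hf hev
    have hPC : P = Polynomial.C (P.coeff 0) := Polynomial.eq_C_of_natDegree_le_zero hP
    have h0 := hev z₁ (Metric.mem_ball_self hr)
    rw [hPC] at h0 ⊢
    simp only [Polynomial.eval_C] at h0
    rw [h0, map_zero]
  | succ N ihN =>
    intro P hP z₁ r₁ hr hsub hf hev
    by_cases hP0 : P = 0
    · exact hP0
    have hz₁Ω : z₁ ∈ Ω := hsub (Metric.mem_ball_self hr)
    set u₁ : ℂ := f₂ z₁ / f₁ z₁ with hu₁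
    have hroot : P.IsRoot u₁ := hev z₁ (Metric.mem_ball_self hr)
    obtain ⟨Q, hQ⟩ := (Polynomial.dvd_iff_isRoot).mpr hroot
    by_cases hQ0 : Q = 0
    · rw [hQ, hQ0, mul_zero]
    have hh : AnalyticOnNhd ℂ (fun z => f₂ z - u₁ * f₁ z) Ω :=
      hf₂.sub (analyticOnNhd_const.mul hf₁)
    rcases (hh z₁ hz₁Ω).eventually_eq_zero_or_eventually_ne_zero with hcase | hcase
    · exfalso
      apply hnc u₁
      exact hh.eqOn_zero_of_preconnected_of_eventuallyEq_zero hconn hz₁Ω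
        (hcase.mono fun x hx => by simpa using hx)
    · have hballmem : Metric.ball z₁ r₁ ∈ nhdsWithin z₁ {z₁}ᶜ :=
        mem_nhdsWithin_of_mem_nhds (Metric.ball_mem_nhds z₁ hr)
      obtain ⟨z₂, hz₂ne, hz₂ball⟩ :=
        (hcase.and (Filter.eventually_mem_set.mpr hballmem)).exists
      have hz₂Ω : z₂ ∈ Ω := hsub hz₂ball
      have hcont : ContinuousAt (fun z => f₂ z - u₁ * f₁ z) z₂ := (hh z₂ hz₂Ω).continuousAt
      have hev2 : ∀ᶠ z in nhds z₂, (f₂ z - u₁ * f₁ z ≠ 0) ∧ z ∈ Metric.ball z₁ r₁ :=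
        (hcont.eventually_ne hz₂ne).and (Metric.isOpen_ball.eventually_mem hz₂ball)
      obtain ⟨r₂, hr₂pos, hball₂⟩ := Metric.mem_nhds_iff.mp hev2
      have hQdeg : Q.natDegree ≤ N := by
        have h1 : P.natDegree = 1 + Q.natDegree := by
          rw [hQ, Polynomial.natDegree_mul (Polynomial.X_sub_C_ne_zero u₁) hQ0,
            Polynomial.natDegree_X_sub_C]
        omega
      have hQzero : Q = 0 := by
        apply ihN Q hQdeg z₂ r₂ hr₂pos
        · intro z hz; exact hsub (hball₂ hz).2
        · intro z hz; exact hf z (hball₂ hz).2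
        · intro z hz
          have h3 := hev z (hball₂ hz).2
          rw [hQ, Polynomial.eval_mul, Polynomial.eval_sub, Polynomial.eval_X,
            Polynomial.eval_C] at h3
          have hf₁z : f₁ z ≠ 0 := hf z (hball₂ hz).2
          have hne : f₂ z / f₁ z - u₁ ≠ 0 := by
            intro hcontra
            apply (hball₂ hz).1
            have : f₂ z - u₁ * f₁ z = (f₂ z / f₁ z - u₁) * f₁ z := by
              field_simp
            rw [this, hcontra, zero_mul]
          rcases mul_eq_zero.mp h3 with h | h
          · exact absurd h hne
          · exact h
      rw [hQ, hQzero, mul_zero]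

end D


theorem powers_solve_kth_order (Ω : Set ℂ) (hΩ : IsOpen Ω) (hconn : IsConnected Ω)
    (hsc : SimplyConnectedSpace Ω)
    (a f₁ f₂ : ℂ → ℂ) (ha : AnalyticOn ℂ a Ω)
    (hf₁ : AnalyticOn ℂ f₁ Ω) (hf₂ : AnalyticOn ℂ f₂ Ω)
    (hode₁ : ∀ z ∈ Ω, deriv (deriv f₁) z + a z * f₁ z = 0)
    (hode₂ : ∀ z ∈ Ω, deriv (deriv f₂) z + a z * f₂ z = 0)
    (hli : ∀ c₁ c₂ : ℂ, (∀ z ∈ Ω, c₁ * f₁ z + c₂ * f₂ z = 0) → c₁ = 0 ∧ c₂ = 0)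
    (k : ℕ) (hk : 2 ≤ k) :
    (∃ b : ℕ → (ℂ → ℂ),
      (∀ j < k - 1, AnalyticOn ℂ (b j) Ω) ∧
      (∀ j : Fin k, ∀ z ∈ Ω,
        iteratedDeriv k (fun w => f₁ w ^ (k - 1 - (j : ℕ)) * f₂ w ^ (j : ℕ)) z +
          ∑ i ∈ Finset.range (k - 1),
            b i z * iteratedDeriv i
              (fun w => f₁ w ^ (k - 1 - (j : ℕ)) * f₂ w ^ (j : ℕ)) z = 0) ∧
      (∀ z ∈ Ω, b (k - 2) z = (((k : ℂ) - 1) * k * ((k : ℂ) + 1) / 6) * a z)) ∧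
    (∀ c : Fin k → ℂ,
      (∀ z ∈ Ω, ∑ j : Fin k, c j * (f₁ z ^ (k - 1 - (j : ℕ)) * f₂ z ^ (j : ℕ)) = 0) →
        ∀ j, c j = 0) := by
  have hpre : IsPreconnected Ω := hconn.isPreconnected
  have ha' : AnalyticOnNhd ℂ a Ω := (hΩ.analyticOn_iff_analyticOnNhd).mp ha
  have hf₁' : AnalyticOnNhd ℂ f₁ Ω := (hΩ.analyticOn_iff_analyticOnNhd).mp hf₁
  have hf₂' : AnalyticOnNhd ℂ f₂ Ω := (hΩ.analyticOn_iff_analyticOnNhd).mp hf₂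
  have hode₁' : ∀ z ∈ Ω, deriv (deriv f₁) z = -(a z * f₁ z) := fun z hz => by
    linear_combination hode₁ z hz
  have hode₂' : ∀ z ∈ Ω, deriv (deriv f₂) z = -(a z * f₂ z) := fun z hz => by
    linear_combination hode₂ z hz
  obtain ⟨t, rfl⟩ : ∃ t, k = t + 2 := ⟨k - 2, by omega⟩
  constructor
  · refine ⟨fun i => cC a (t+1) (t+2) i, ?_, ?_, ?_⟩
    · intro j _
      exact (hΩ.analyticOn_iff_analyticOnNhd).mpr (cC_analytic ha' (t+1) (t+2) j)
    · intro j z hz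
      have hjlt : (j:ℕ) < t+2 := j.isLt
      have hpq : (t+2-1-(j:ℕ)) + (j:ℕ) = t+1 := by omega
      have hkey := key hΩ ha' hf₁' hf₂' hode₁' hode₂' (t+2-1-(j:ℕ)) (j:ℕ) (t+2) z hz
      rw [hpq] at hkey
      have hzero : Sf f₁ f₂ (t+2-1-(j:ℕ)) (j:ℕ) (t+2) z = 0 := by
        rw [Sf_top (t+2-1-(j:ℕ)) (j:ℕ) (t+2) (by omega)]
      rw [hzero, Finset.sum_range_succ, Finset.sum_range_succ] at hkey
      have hdiagz : cC a (t+1) (t+2) (t+2) z = 1 := by rw [cC_diag]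
      have hsubz : cC a (t+1) (t+2) (t+1) z = 0 := by rw [cC_subdiag]
      rw [hdiagz, hsubz, zero_mul, add_zero, one_mul] at hkey
      simp only [show t+2-1 = t+1 from rfl] at hkey ⊢
      linear_combination hkey
    · intro z hz
      simp only [show t+2-2 = t from rfl]
      have hsub : cC a (t+1) (t+2) t z = gam (t+1) (t+2) * a z := by
        rw [cC_subsub]
      rw [hsub]
      simp only [gam]
      push_cast
      ring
  · intro c H
    have hnc : ∀ r : ℂ, ¬ Set.EqOn (fun z => f₂ z - r * f₁ z) 0 Ω := by
      intro r hEq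
      have h2 := hli r (-1) (fun z hz => by
        have h3 : f₂ z - r * f₁ z = 0 := hEq hz
        linear_combination -h3)
      exact absurd h2.2 (by norm_num)
    have hf₁ne : ∃ z₀ ∈ Ω, f₁ z₀ ≠ 0 := by
      by_contra h
      push_neg at h
      have h10 := hli 1 0 (fun z hz => by rw [h z hz]; ring)
      exact one_ne_zero h10.1
    obtain ⟨z₀, hz₀Ω, hz₀⟩ := hf₁ne
    have hopen : IsOpen (Ω ∩ f₁ ⁻¹' {(0:ℂ)}ᶜ) :=
      hf₁'.continuousOn.isOpen_inter_preimage hΩ isOpen_compl_singleton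
    have hz₀mem : z₀ ∈ Ω ∩ f₁ ⁻¹' {(0:ℂ)}ᶜ := ⟨hz₀Ω, hz₀⟩
    obtain ⟨r₁, hr₁pos, hball⟩ := Metric.isOpen_iff.mp hopen z₀ hz₀mem
    set P : Polynomial ℂ := ∑ j : Fin (t+2), Polynomial.C (c j) * Polynomial.X ^ (j:ℕ)
      with hPdef
    have hev : ∀ z ∈ Metric.ball z₀ r₁, Polynomial.eval (f₂ z / f₁ z) P = 0 := by
      intro z hz
      have hzΩ : z ∈ Ω := (hball hz).1
      have hf₁z : f₁ z ≠ 0 := (hball hz).2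
      have hexp : f₁ z ^ (t+1) * Polynomial.eval (f₂ z / f₁ z) P
          = ∑ j : Fin (t+2), c j * (f₁ z ^ (t+2-1-(j:ℕ)) * f₂ z ^ (j:ℕ)) := by
        rw [hPdef, Polynomial.eval_finset_sum, Finset.mul_sum]
        apply Finset.sum_congr rfl
        intro j _
        rw [Polynomial.eval_mul, Polynomial.eval_C, Polynomial.eval_pow, Polynomial.eval_X,
          div_pow]
        have hj : (j:ℕ) < t+2 := j.isLt
        have hsplit : f₁ z ^ (t+1) = f₁ z ^ (t+2-1-(j:ℕ)) * f₁ z ^ (j:ℕ) := by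
          rw [← pow_add]
          congr 1
          omega
        rw [hsplit]
        field_simp
      have h5 : f₁ z ^ (t+1) * Polynomial.eval (f₂ z / f₁ z) P = 0 := by
        rw [hexp]
        exact H z hzΩ
      exact (mul_eq_zero.mp h5).resolve_left (pow_ne_zero _ hf₁z)
    have hP0 : P = 0 := poly_vanish hpre hf₁' hf₂' hnc P.natDegree P le_rfl z₀ r₁ hr₁pos
      (fun z hz => (hball hz).1) (fun z hz => (hball hz).2) hev
    intro j
    have hcoeff : P.coeff (j:ℕ) = c j := by
      rw [hPdef, Polynomial.finset_sum_coeff]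
      simp only [Polynomial.coeff_C_mul, Polynomial.coeff_X_pow]
      rw [Finset.sum_eq_single_of_mem j (Finset.mem_univ j)]
      · simp
      · intro b _ hbj
        have hne : (j:ℕ) ≠ (b:ℕ) := fun hc => hbj (Fin.ext hc.symm)
        simp [hne]
    rw [hP0] at hcoeff
    simpa using hcoeff.symm
end

section
/- For α > 1 and j ∈ {1,2}, the functions f_j(z) = z^{(1−α)/2}·exp((−1)^{j+1} z^α) (principal branches) are zero-free solutions of f'' + a f = 0 on the right half-plane, where a(z) = (1−α²)/(4z²) − α² z^{2α−2}; moreover f₁ and f₂ are linearly independent over ℂ. -/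
set_option maxHeartbeats 1000000

open Complex

lemma hasDerivAt_aux (b c ε : ℂ) {z : ℂ} (hz : 0 < z.re) :
    HasDerivAt (fun z : ℂ => z ^ b * Complex.exp (ε * z ^ c))
      (b * z ^ (b - 1) * Complex.exp (ε * z ^ c)
        + z ^ b * (Complex.exp (ε * z ^ c) * (ε * (c * z ^ (c - 1))))) z := by
  have hs : z ∈ slitPlane := Complex.mem_slitPlane_iff.2 (Or.inl hz)
  have h1 : HasDerivAt (fun z : ℂ => z ^ b) (b * z ^ (b - 1)) z :=
    (Complex.hasStrictDerivAt_cpow_const hs).hasDerivAt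
  have h2 : HasDerivAt (fun z : ℂ => z ^ c) (c * z ^ (c - 1)) z :=
    (Complex.hasStrictDerivAt_cpow_const hs).hasDerivAt
  have h3 : HasDerivAt (fun z : ℂ => ε * z ^ c) (ε * (c * z ^ (c - 1))) z := h2.const_mul ε
  have h4 : HasDerivAt (fun z : ℂ => Complex.exp (ε * z ^ c))
      (Complex.exp (ε * z ^ c) * (ε * (c * z ^ (c - 1)))) z := h3.cexp
  exact h1.mul h4

lemma hasDerivAt_aux2 (b c ε : ℂ) {z : ℂ} (hz : 0 < z.re) :
    HasDerivAt (fun z : ℂ => b * z ^ (b - 1) * Complex.exp (ε * z ^ c)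
        + z ^ b * (Complex.exp (ε * z ^ c) * (ε * (c * z ^ (c - 1)))))
      ((b * ((b - 1) * z ^ (b - 1 - 1)) * Complex.exp (ε * z ^ c)
          + b * z ^ (b - 1) * (Complex.exp (ε * z ^ c) * (ε * (c * z ^ (c - 1)))))
        + (b * z ^ (b - 1) * (Complex.exp (ε * z ^ c) * (ε * (c * z ^ (c - 1))))
          + z ^ b * (Complex.exp (ε * z ^ c) * (ε * (c * z ^ (c - 1))) * (ε * (c * z ^ (c - 1)))
            + Complex.exp (ε * z ^ c) * (ε * (c * ((c - 1) * z ^ (c - 1 - 1))))))) z := by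
  have hs : z ∈ slitPlane := Complex.mem_slitPlane_iff.2 (Or.inl hz)
  have hb : HasDerivAt (fun z : ℂ => z ^ b) (b * z ^ (b - 1)) z :=
    (Complex.hasStrictDerivAt_cpow_const hs).hasDerivAt
  have hb1 : HasDerivAt (fun z : ℂ => z ^ (b - 1)) ((b - 1) * z ^ (b - 1 - 1)) z :=
    (Complex.hasStrictDerivAt_cpow_const hs).hasDerivAt
  have hc1 : HasDerivAt (fun z : ℂ => z ^ (c - 1)) ((c - 1) * z ^ (c - 1 - 1)) z :=
    (Complex.hasStrictDerivAt_cpow_const hs).hasDerivAt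
  have h2 : HasDerivAt (fun z : ℂ => z ^ c) (c * z ^ (c - 1)) z :=
    (Complex.hasStrictDerivAt_cpow_const hs).hasDerivAt
  have hE : HasDerivAt (fun z : ℂ => Complex.exp (ε * z ^ c))
      (Complex.exp (ε * z ^ c) * (ε * (c * z ^ (c - 1)))) z := (h2.const_mul ε).cexp
  have hg : HasDerivAt (fun z : ℂ => ε * (c * z ^ (c - 1)))
      (ε * (c * ((c - 1) * z ^ (c - 1 - 1)))) z := (hc1.const_mul c).const_mul ε
  exact ((hb1.const_mul b).mul hE).add (hb.mul (hE.mul hg))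


lemma alg_ode (α : ℝ) (ε : ℂ) (hε : ε = 1 ∨ ε = -1) {z : ℂ} (hz0 : z ≠ 0)
    (b c : ℂ) (hb : b = (1 - (α : ℂ)) / 2) (hc : c = (α : ℂ)) :
    ((b * ((b - 1) * z ^ (b - 1 - 1)) * Complex.exp (ε * z ^ c)
          + b * z ^ (b - 1) * (Complex.exp (ε * z ^ c) * (ε * (c * z ^ (c - 1)))))
        + (b * z ^ (b - 1) * (Complex.exp (ε * z ^ c) * (ε * (c * z ^ (c - 1))))
          + z ^ b * (Complex.exp (ε * z ^ c) * (ε * (c * z ^ (c - 1))) * (ε * (c * z ^ (c - 1)))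
            + Complex.exp (ε * z ^ c) * (ε * (c * ((c - 1) * z ^ (c - 1 - 1)))))))
      + ((1 - (α : ℂ) ^ 2) / (4 * z ^ 2) - (α : ℂ) ^ 2 * z ^ (((2 * α - 2 : ℝ) : ℂ)))
          * (z ^ b * Complex.exp (ε * z ^ c)) = 0 := by
  have hb1 : z ^ (b - 1) = z ^ b / z := by
    rw [Complex.cpow_sub _ _ hz0, Complex.cpow_one]
  have hb2 : z ^ (b - 1 - 1) = z ^ b / z / z := by
    rw [Complex.cpow_sub _ _ hz0, Complex.cpow_one, hb1]
  have hc1 : z ^ (c - 1) = z ^ c / z := by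
    rw [Complex.cpow_sub _ _ hz0, Complex.cpow_one]
  have hc2 : z ^ (c - 1 - 1) = z ^ c / z / z := by
    rw [Complex.cpow_sub _ _ hz0, Complex.cpow_one, hc1]
  have h5 : z ^ (((2 * α - 2 : ℝ) : ℂ)) = (z ^ c / z) * (z ^ c / z) := by
    have h : ((2 * α - 2 : ℝ) : ℂ) = (c - 1) + (c - 1) := by rw [hc]; push_cast; ring
    rw [h, Complex.cpow_add _ _ hz0, hc1]
  rw [hb2, hb1, hc2, hc1, h5, hb, hc]
  generalize z ^ ((α : ℂ)) = U
  generalize z ^ ((1 - (α : ℂ)) / 2) = P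
  generalize Complex.exp (ε * U) = E
  have h10 : z ^ 10 * z⁻¹ ^ 4 = z ^ 6 := by
    have h : z ^ 10 = z ^ 6 * z ^ 4 := by ring
    rw [h, inv_pow, mul_assoc, mul_inv_cancel₀ (pow_ne_zero 4 hz0), mul_one]
  rcases hε with h | h <;> subst h <;> field_simp [hz0]
  · ring
  · ring


theorem halfplane_zero_free_solutions (α : ℝ) (hα : 1 < α) :
    let H : Set ℂ := {z | 0 < z.re}
    let a : ℂ → ℂ := fun z => (1 - (α : ℂ) ^ 2) / (4 * z ^ 2) -
      (α : ℂ) ^ 2 * z ^ (((2 * α - 2 : ℝ) : ℂ))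
    let f₁ : ℂ → ℂ := fun z => z ^ ((((1 - α) / 2 : ℝ) : ℂ)) * Complex.exp (z ^ ((α : ℝ) : ℂ))
    let f₂ : ℂ → ℂ := fun z => z ^ ((((1 - α) / 2 : ℝ) : ℂ)) * Complex.exp (-(z ^ ((α : ℝ) : ℂ)))
    (∀ z ∈ H, f₁ z ≠ 0 ∧ f₂ z ≠ 0) ∧
    (∀ z ∈ H, deriv (deriv f₁) z + a z * f₁ z = 0) ∧
    (∀ z ∈ H, deriv (deriv f₂) z + a z * f₂ z = 0) ∧
    (∀ c₁ c₂ : ℂ, (∀ z ∈ H, c₁ * f₁ z + c₂ * f₂ z = 0) → c₁ = 0 ∧ c₂ = 0) := by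
  intro H a f₁ f₂
  have hHo : IsOpen H := isOpen_lt continuous_const Complex.continuous_re
  set b : ℂ := (((1 - α) / 2 : ℝ) : ℂ) with hbdef
  set c : ℂ := ((α : ℝ) : ℂ) with hcdef
  have hb : b = (1 - (α : ℂ)) / 2 := by rw [hbdef]; push_cast; ring
  have hc : c = (α : ℂ) := rfl
  have hne : ∀ z ∈ H, z ≠ 0 := by
    intro z hz h0
    rw [h0] at hz
    simp [H] at hz
  -- general ODE fact
  have key : ∀ ε : ℂ, ε = 1 ∨ ε = -1 → ∀ z ∈ H,
      deriv (deriv (fun z : ℂ => z ^ b * Complex.exp (ε * z ^ c))) z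
        + a z * (z ^ b * Complex.exp (ε * z ^ c)) = 0 := by
    intro ε hε z hz
    have hz' : 0 < z.re := hz
    set g : ℂ → ℂ := fun z => z ^ b * Complex.exp (ε * z ^ c) with hg
    set F : ℂ → ℂ := fun z => b * z ^ (b - 1) * Complex.exp (ε * z ^ c)
        + z ^ b * (Complex.exp (ε * z ^ c) * (ε * (c * z ^ (c - 1)))) with hF
    have hEq : Set.EqOn (deriv g) F H := by
      intro w hw
      exact (hasDerivAt_aux b c ε hw).deriv
    have hnhd : deriv g =ᶠ[nhds z] F :=
      Filter.eventuallyEq_of_mem (hHo.mem_nhds hz) hEq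
    have h2 : deriv (deriv g) z = deriv F z := hnhd.deriv_eq
    have h3 : deriv F z = (b * ((b - 1) * z ^ (b - 1 - 1)) * Complex.exp (ε * z ^ c)
          + b * z ^ (b - 1) * (Complex.exp (ε * z ^ c) * (ε * (c * z ^ (c - 1)))))
        + (b * z ^ (b - 1) * (Complex.exp (ε * z ^ c) * (ε * (c * z ^ (c - 1))))
          + z ^ b * (Complex.exp (ε * z ^ c) * (ε * (c * z ^ (c - 1))) * (ε * (c * z ^ (c - 1)))
            + Complex.exp (ε * z ^ c) * (ε * (c * ((c - 1) * z ^ (c - 1 - 1)))))) :=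
      (hasDerivAt_aux2 b c ε hz').deriv
    rw [h2, h3]
    exact alg_ode α ε hε (hne z hz) b c hb hc
  have hf₁ : f₁ = fun z : ℂ => z ^ b * Complex.exp ((1 : ℂ) * z ^ c) := by
    funext z; rw [one_mul]
  have hf₂ : f₂ = fun z : ℂ => z ^ b * Complex.exp ((-1 : ℂ) * z ^ c) := by
    funext z; rw [neg_one_mul]
  have hpow_ne : ∀ z : ℂ, z ≠ 0 → ∀ w : ℂ, z ^ w ≠ 0 := by
    intro z hz0 w
    rw [Complex.cpow_def_of_ne_zero hz0]
    exact Complex.exp_ne_zero _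
  refine ⟨?_, ?_, ?_, ?_⟩
  · intro z hz
    have hz0 := hne z hz
    exact ⟨mul_ne_zero (hpow_ne z hz0 _) (Complex.exp_ne_zero _),
      mul_ne_zero (hpow_ne z hz0 _) (Complex.exp_ne_zero _)⟩
  · intro z hz
    rw [hf₁]
    exact key 1 (Or.inl rfl) z hz
  · intro z hz
    rw [hf₂]
    exact key (-1) (Or.inr rfl) z hz
  · intro c₁ c₂ hlin
    have h1mem : (1 : ℂ) ∈ H := by simp [H]
    have h2mem : (2 : ℂ) ∈ H := by
      show (0:ℝ) < (2 : ℂ).re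
      simp
    have e1 : c₁ * Complex.exp 1 + c₂ * Complex.exp (-1) = 0 := by
      have := hlin 1 h1mem
      simpa [f₁, f₂, Complex.one_cpow] using this
    set T : ℂ := (2 : ℂ) ^ c with hT
    have e2 : c₁ * Complex.exp T + c₂ * Complex.exp (-T) = 0 := by
      have h := hlin 2 h2mem
      simp only [f₁, f₂] at h
      have hP : (2 : ℂ) ^ b ≠ 0 := hpow_ne 2 (by norm_num) b
      have h' : (2:ℂ) ^ b * (c₁ * Complex.exp T + c₂ * Complex.exp (-T)) = 0 := by
        rw [← h]; ring
      exact (mul_eq_zero.1 h').resolve_left hP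
    -- T is a positive real
    have hTr : T = (((2 : ℝ) ^ α : ℝ) : ℂ) := by
      rw [hT, hc, Complex.ofReal_cpow (by norm_num : (0:ℝ) ≤ 2)]
      norm_num
    have hE1 : Complex.exp (-1) = (Complex.exp 1)⁻¹ := Complex.exp_neg 1
    have hET : Complex.exp (-T) = (Complex.exp T)⁻¹ := Complex.exp_neg T
    have hexp1 : Complex.exp 1 ≠ 0 := Complex.exp_ne_zero _
    have hexpT : Complex.exp T ≠ 0 := Complex.exp_ne_zero _
    have g1 : c₁ * (Complex.exp 1 * Complex.exp 1) + c₂ = 0 := by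
      have := congrArg (· * Complex.exp 1) e1
      simp only [add_mul, zero_mul] at this
      rw [hE1] at this
      field_simp at this
      linear_combination this
    have g2 : c₁ * (Complex.exp T * Complex.exp T) + c₂ = 0 := by
      have := congrArg (· * Complex.exp T) e2
      simp only [add_mul, zero_mul] at this
      rw [hET] at this
      field_simp at this
      linear_combination this
    have hdiff : c₁ * (Complex.exp 1 * Complex.exp 1 - Complex.exp T * Complex.exp T) = 0 := by
      linear_combination g1 - g2
    have hne' : Complex.exp 1 * Complex.exp 1 - Complex.exp T * Complex.exp T ≠ 0 := by
      rw [← Complex.exp_add, ← Complex.exp_add, hTr, sub_ne_zero]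
      intro hcontra
      rw [← Complex.ofReal_add, show ((1:ℂ) + 1) = ((2:ℝ):ℂ) by norm_num,
        ← Complex.ofReal_exp, ← Complex.ofReal_exp, Complex.ofReal_inj] at hcontra
      have h2α : (2 : ℝ) < (2:ℝ) ^ α + (2:ℝ) ^ α := by
        have h1 : (2:ℝ) = (2:ℝ) ^ (1:ℝ) := (Real.rpow_one 2).symm
        have h2 : (2:ℝ) ^ (1:ℝ) < (2:ℝ) ^ α :=
          Real.rpow_lt_rpow_left_iff (by norm_num : (1:ℝ) < 2) |>.2 hα
        have hpos : (0:ℝ) < (2:ℝ) ^ α := Real.rpow_pos_of_pos (by norm_num) α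
        nlinarith
      exact absurd hcontra (ne_of_lt (Real.exp_lt_exp.2 h2α))
    have hc₁ : c₁ = 0 := (mul_eq_zero.1 hdiff).resolve_right hne'
    have hc₂ : c₂ = 0 := by
      have := g1
      rw [hc₁] at this
      simpa using this
    exact ⟨hc₁, hc₂⟩
end

section
/- For the map T(z) = ζ(1 − (1 − z·conj(ζ))^α) with ζ on the unit circle and 0 < α < 1, T is holomorphic and injective on the unit disc, T(𝔻) ⊂ 𝔻, and |T'(T^{-1}(z))| = α·|ζ − z|^{1 − 1/α} for all z ∈ T(𝔻). -/
open Complex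

private lemma cos_rpow_le_aux (θ a : ℝ) (hθ : θ ∈ Set.Icc (-(Real.pi/2)) (Real.pi/2))
    (ha₀ : 0 ≤ a) (ha₁ : a ≤ 1) : Real.cos θ ^ a ≤ Real.cos (a * θ) := by
  have h0 : (0:ℝ) ∈ Set.Icc (-(Real.pi/2)) (Real.pi/2) := by
    constructor <;> [linarith [Real.pi_pos]; linarith [Real.pi_pos]]
  have hcos : 0 ≤ Real.cos θ := Real.cos_nonneg_of_mem_Icc hθ
  have hconc := strictConcaveOn_cos_Icc.concaveOn.2 hθ h0 ha₀ (by linarith : (0:ℝ) ≤ 1 - a)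
    (by ring)
  have hgm := Real.geom_mean_le_arith_mean2_weighted ha₀ (by linarith : (0:ℝ) ≤ 1 - a)
    hcos zero_le_one (by ring)
  simp only [smul_eq_mul, mul_zero, add_zero, Real.cos_zero, mul_one] at hconc hgm
  calc Real.cos θ ^ a = Real.cos θ ^ a * 1 ^ (1 - a) := by simp
    _ ≤ a * Real.cos θ + (1 - a) := hgm
    _ ≤ Real.cos (a * θ) := by simpa [mul_one] using hconc

private lemma two_cos_bound (a r θ : ℝ) (ha₀ : 0 < a) (ha₁ : a ≤ 1) (hr : 0 < r)
    (hθ : |θ| < Real.pi / 2) (h : r < 2 * Real.cos θ) : r ^ a < 2 * Real.cos (a * θ) := by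
  have hθ' : θ ∈ Set.Icc (-(Real.pi/2)) (Real.pi/2) := by
    have := abs_le.mp hθ.le; exact ⟨this.1, this.2⟩
  have hcos : 0 ≤ Real.cos θ := Real.cos_nonneg_of_mem_Icc hθ'
  have hc := cos_rpow_le_aux θ a hθ' ha₀.le ha₁
  have h1 : r ^ a < (2 * Real.cos θ) ^ a := Real.rpow_lt_rpow hr.le h ha₀
  have h2 : (2 * Real.cos θ) ^ a = 2 ^ a * Real.cos θ ^ a := Real.mul_rpow (by norm_num) hcos
  have h3 : (2:ℝ) ^ a ≤ 2 := by
    calc (2:ℝ) ^ a ≤ 2 ^ (1:ℝ) := Real.rpow_le_rpow_of_exponent_le one_le_two ha₁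
      _ = 2 := Real.rpow_one 2
  have h4 : 0 ≤ Real.cos θ ^ a := Real.rpow_nonneg hcos a
  calc r ^ a < 2 ^ a * Real.cos θ ^ a := by rw [← h2]; exact h1
    _ ≤ 2 * Real.cos (a * θ) := by
        have h5 : (0:ℝ) ≤ 2 ^ a := Real.rpow_nonneg (by norm_num) a
        nlinarith

private lemma cpow_re_eq (u : ℂ) (hu : u ≠ 0) (a : ℝ) :
    (u ^ (a:ℂ)).re = ‖u‖ ^ a * Real.cos (a * u.arg) := by
  rw [Complex.cpow_def_of_ne_zero hu, Complex.exp_re]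
  have h1 : (Complex.log u * (a:ℂ)).re = Real.log (‖u‖) * a := by
    simp [Complex.mul_re, Complex.log_re]
  have h2 : (Complex.log u * (a:ℂ)).im = u.arg * a := by
    simp [Complex.mul_im, Complex.log_im]
  rw [h1, h2, ← Real.rpow_def_of_pos (norm_pos_iff.mpr hu), mul_comm u.arg a]

private lemma cpow_abs_eq (u : ℂ) (hu : u ≠ 0) (a : ℝ) :
    ‖u ^ (a:ℂ)‖ = ‖u‖ ^ a := by
  rw [Complex.norm_cpow_of_ne_zero hu]
  simp

private lemma disc_lemma (a : ℝ) (ha₀ : 0 < a) (ha₁ : a ≤ 1) (u : ℂ) (hre : 0 < u.re)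
    (h1 : ‖1 - u‖ < 1) : ‖1 - u ^ (a:ℂ)‖ < 1 := by
  have hu : u ≠ 0 := by intro h; rw [h] at hre; simp at hre
  set r := ‖u‖ with hrdef
  have hr : 0 < r := norm_pos_iff.mpr hu
  have harg : |u.arg| < Real.pi / 2 := Complex.abs_arg_lt_pi_div_two_iff.2 (Or.inl hre)
  have hcos : Real.cos u.arg = u.re / r := Complex.cos_arg hu
  have hre_eq : u.re = r * Real.cos u.arg := by rw [hcos]; field_simp
  -- from h1 : r < 2 cos (arg u)
  have hsq : ‖1 - u‖ ^ 2 < 1 := by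
    nlinarith [norm_nonneg (1 - u)]
  rw [Complex.sq_norm, Complex.normSq_apply] at hsq
  simp only [Complex.sub_re, Complex.sub_im, Complex.one_re, Complex.one_im] at hsq
  have hnsq : u.re ^ 2 + u.im ^ 2 < 2 * u.re := by nlinarith
  have hr2 : r ^ 2 = u.re ^ 2 + u.im ^ 2 := by
    rw [hrdef, Complex.sq_norm, Complex.normSq_apply]; ring
  have hkey : r < 2 * Real.cos u.arg := by
    have : r ^ 2 < 2 * (r * Real.cos u.arg) := by rw [← hre_eq, hr2]; exact hnsq
    nlinarith
  have hmain : r ^ a < 2 * Real.cos (a * u.arg) := two_cos_bound a r u.arg ha₀ ha₁ hr harg hkey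
  -- now conclude
  have hsre : (u ^ (a:ℂ)).re = r ^ a * Real.cos (a * u.arg) := cpow_re_eq u hu a
  have hsabs : ‖u ^ (a:ℂ)‖ = r ^ a := cpow_abs_eq u hu a
  have hra : 0 < r ^ a := Real.rpow_pos_of_pos hr a
  have hgoal_sq : ‖1 - u ^ (a:ℂ)‖ ^ 2 < 1 := by
    rw [Complex.sq_norm, Complex.normSq_apply]
    simp only [Complex.sub_re, Complex.sub_im, Complex.one_re, Complex.one_im]
    have him_re : (u ^ (a:ℂ)).re ^ 2 + (u ^ (a:ℂ)).im ^ 2 = (r ^ a) ^ 2 := by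
      rw [← hsabs, Complex.sq_norm, Complex.normSq_apply]; ring
    nlinarith [him_re]
  nlinarith [norm_nonneg (1 - u ^ (a:ℂ))]

theorem stolz_angle_map (ζ : ℂ) (hζ : ‖ζ‖ = 1) (α : ℝ)
    (hα₀ : 0 < α) (hα₁ : α < 1) :
    let T : ℂ → ℂ := fun z => ζ * (1 - (1 - z * (starRingEnd ℂ) ζ) ^ ((α : ℝ) : ℂ))
    DifferentiableOn ℂ T (Metric.ball 0 1) ∧
    Set.InjOn T (Metric.ball 0 1) ∧
    T '' Metric.ball 0 1 ⊆ Metric.ball 0 1 ∧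
    (∀ w ∈ Metric.ball (0 : ℂ) 1,
      ‖deriv T w‖ = α * ‖ζ - T w‖ ^ ((1 - 1 / α : ℝ))) := by
  intro T
  have hζ0 : ζ ≠ 0 := by
    intro h; rw [h] at hζ; simp at hζ
  have hconj : ζ * (starRingEnd ℂ) ζ = 1 := by
    rw [Complex.mul_conj, Complex.normSq_eq_norm_sq, hζ]; norm_num
  have hre : ∀ z : ℂ, ‖z‖ < 1 → 0 < (1 - z * (starRingEnd ℂ) ζ).re := by
    intro z hz
    have h1 : (z * (starRingEnd ℂ) ζ).re ≤ ‖z * (starRingEnd ℂ) ζ‖ :=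
      Complex.re_le_norm _
    have h2 : ‖z * (starRingEnd ℂ) ζ‖ = ‖z‖ := by
      rw [norm_mul, Complex.norm_conj, hζ, mul_one]
    simp only [Complex.sub_re, Complex.one_re]
    linarith [h1.trans_lt (h2 ▸ hz)]
  have hne : ∀ z : ℂ, ‖z‖ < 1 → (1 - z * (starRingEnd ℂ) ζ) ≠ 0 := by
    intro z hz h
    have := hre z hz; rw [h] at this; simp at this
  have hslit : ∀ z : ℂ, ‖z‖ < 1 → (1 - z * (starRingEnd ℂ) ζ) ∈ Complex.slitPlane := by
    intro z hz; exact Or.inl (hre z hz)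
  -- derivative
  have hT : ∀ z : ℂ, ‖z‖ < 1 →
      HasDerivAt T ((α:ℂ) * (1 - z * (starRingEnd ℂ) ζ) ^ ((α:ℂ) - 1)) z := by
    intro z hz
    have h1 : HasDerivAt (fun w : ℂ => 1 - w * (starRingEnd ℂ) ζ) (-(starRingEnd ℂ) ζ) z := by
      simpa using ((hasDerivAt_id z).mul_const ((starRingEnd ℂ) ζ)).const_sub 1
    have h2 := h1.cpow_const (c := ((α:ℝ):ℂ)) (hslit z hz)
    have h3 := (h2.const_sub 1).const_mul ζ
    refine h3.congr_deriv ?_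
    linear_combination ((α:ℂ) * (1 - z * (starRingEnd ℂ) ζ) ^ ((α:ℂ) - 1) : ℂ) * hconj
  -- injectivity key
  have hinv : ∀ u : ℂ, 0 < u.re → (u ^ ((α:ℝ):ℂ)) ^ (((α:ℝ):ℂ))⁻¹ = u := by
    intro u hu
    have hu0 : u ≠ 0 := by intro h; rw [h] at hu; simp at hu
    have harg : |u.arg| < Real.pi / 2 := Complex.abs_arg_lt_pi_div_two_iff.2 (Or.inl hu)
    have him : (Complex.log u * ((α:ℝ):ℂ)).im = u.arg * α := by
      simp [Complex.mul_im, Complex.log_im]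
    have hπ : 0 < Real.pi := Real.pi_pos
    have habs : |u.arg * α| < Real.pi := by
      rw [abs_mul, abs_of_pos hα₀]
      nlinarith [abs_nonneg u.arg]
    have h1 : -Real.pi < (Complex.log u * ((α:ℝ):ℂ)).im := by
      rw [him]; linarith [abs_lt.mp habs |>.1]
    have h2 : (Complex.log u * ((α:ℝ):ℂ)).im ≤ Real.pi := by
      rw [him]; linarith [abs_lt.mp habs |>.2]
    rw [← Complex.cpow_mul _ h1 h2, mul_inv_cancel₀ (by
      simpa using hα₀.ne' : ((α:ℝ):ℂ) ≠ 0), Complex.cpow_one]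
  have hball : ∀ z : ℂ, z ∈ Metric.ball (0:ℂ) 1 → ‖z‖ < 1 := fun z hz => by
    simpa using mem_ball_zero_iff.mp hz
  refine ⟨?_, ?_, ?_, ?_⟩
  · intro z hz
    exact (hT z (hball z hz)).differentiableAt.differentiableWithinAt
  · intro z₁ h₁ z₂ h₂ heq
    have h₁' := hball z₁ h₁
    have h₂' := hball z₂ h₂
    have heq2 : (1 - z₁ * (starRingEnd ℂ) ζ) ^ ((α:ℝ):ℂ) =
        (1 - z₂ * (starRingEnd ℂ) ζ) ^ ((α:ℝ):ℂ) := by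
      have h := mul_left_cancel₀ hζ0 heq
      have : (1:ℂ) - (1 - (1 - z₁ * (starRingEnd ℂ) ζ) ^ ((α:ℝ):ℂ)) =
          1 - (1 - (1 - z₂ * (starRingEnd ℂ) ζ) ^ ((α:ℝ):ℂ)) := by rw [h]
      simpa using this
    have hu : (1 - z₁ * (starRingEnd ℂ) ζ) = (1 - z₂ * (starRingEnd ℂ) ζ) := by
      rw [← hinv _ (hre z₁ h₁'), ← hinv _ (hre z₂ h₂'), heq2]
    have hzz : z₁ * (starRingEnd ℂ) ζ = z₂ * (starRingEnd ℂ) ζ := by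
      have h2 := congrArg (fun x : ℂ => 1 - x) hu
      simpa using h2
    have hcne : (starRingEnd ℂ) ζ ≠ 0 := by
      simpa using hζ0
    exact mul_right_cancel₀ hcne hzz
  · rintro _ ⟨z, hz, rfl⟩
    have hz' := hball z hz
    rw [mem_ball_zero_iff]
    have h1 : ‖T z‖ = ‖1 - (1 - z * (starRingEnd ℂ) ζ) ^ ((α:ℝ):ℂ)‖ := by
      show ‖ζ * _‖ = _
      rw [norm_mul, hζ, one_mul]
    rw [h1]
    apply disc_lemma α hα₀ hα₁.le _ (hre z hz')
    have : (1:ℂ) - (1 - z * (starRingEnd ℂ) ζ) = z * (starRingEnd ℂ) ζ := by ring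
    rw [this, norm_mul, Complex.norm_conj, hζ, mul_one]
    exact hz'
  · intro w hw
    have hw' := hball w hw
    set u : ℂ := 1 - w * (starRingEnd ℂ) ζ with hudef
    have hu0 : u ≠ 0 := hne w hw'
    have hderiv : deriv T w = (α:ℂ) * u ^ ((α:ℂ) - 1) := (hT w hw').deriv
    have hru : 0 < ‖u‖ := norm_pos_iff.mpr hu0
    -- LHS
    have hL : ‖deriv T w‖ = α * ‖u‖ ^ (α - 1 : ℝ) := by
      rw [hderiv, norm_mul, Complex.norm_real, Real.norm_eq_abs, abs_of_pos hα₀]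
      congr 1
      have : ((α:ℂ) - 1) = (((α - 1 : ℝ)):ℂ) := by push_cast; ring
      rw [this, cpow_abs_eq u hu0]
    -- RHS
    have hTw : ζ - T w = ζ * u ^ ((α:ℝ):ℂ) := by
      show ζ - ζ * (1 - u ^ ((α:ℝ):ℂ)) = _
      ring
    have hR : ‖ζ - T w‖ = ‖u‖ ^ (α : ℝ) := by
      rw [hTw, norm_mul, hζ, one_mul, cpow_abs_eq u hu0]
    rw [hL, hR, ← Real.rpow_mul (norm_nonneg u)]
    congr 1
    field_simp
end
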